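/- arXiv:2105.13359 — 5 statements merged into one kernel-verified Lean document; each statement's English description precedes it below -/
import Mathlib

section
/- Vanishing of off-critical string correlators (Theorem 1, part 1). Assume BDI data with n_z + n_Z ≥ 1 satisfying the generic condition. Then for every integer α with α < ω − n_z or α > ω + n_Z, and every integer N ≥ N_α, one has D_N[t_α] = 0. -/
open scoped BigOperators
open Filter

/-- The `k`-th Fourier coefficient of a symbol `t` on the unit circle. -/
noncomputable def symbolCoeff (t : ℂ → ℂ) (k : ℤ) : ℂ :=
  (1 / (2 * Real.pi)) *
    ∫ θ in (0:ℝ)..(2 * Real.pi),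
      t (Complex.exp (Complex.I * (θ : ℂ))) * Complex.exp (-(Complex.I * (k : ℂ) * (θ : ℂ)))

/-- The `N × N` Toeplitz determinant `D_N[t]` generated by the symbol `t`. -/
noncomputable def toeplitzDet (t : ℂ → ℂ) (N : ℕ) : ℂ :=
  Matrix.det (Matrix.of fun m n : Fin N => symbolCoeff t ((m : ℤ) - (n : ℤ)))

/-- The BDI string symbol `t_α`. -/
noncomputable def bdiSymbol (nP : ℤ) (nz nZ : ℕ) (z : Fin nz → ℂ) (Z : Fin nZ → ℂ)
    (α : ℤ) (w : ℂ) : ℂ :=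
  w ^ ((nz : ℤ) + (nZ : ℤ) - nP - α) * (∏ k, (-Z k))⁻¹ *
    ((∏ j, (w - z j)) * (∏ k, (w - Z k))) /
    ((∏ j, (1 - w * z j)) * (∏ k, (w - (Z k)⁻¹)))

open Complex Metric intervalIntegral Polynomial Finset
set_option maxHeartbeats 1000000

section helpers

variable {nz nZ : ℕ} {z : Fin nz → ℂ} {Z : Fin nZ → ℂ}

lemma normExp (θ : ℝ) : ‖Complex.exp (Complex.I * θ)‖ = 1 := by
  rw [Complex.norm_exp]
  simp

lemma D1_ne (hz : ∀ j, ‖z j‖ < 1) {w : ℂ} (hw : ‖w‖ ≤ 1) :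
    (∏ j, (1 - w * z j)) ≠ 0 := by
  rw [Finset.prod_ne_zero_iff]
  intro j _ h
  have h1 : w * z j = 1 := by linear_combination -h
  have : ‖w * z j‖ < 1 := by
    rw [norm_mul]
    calc ‖w‖ * ‖z j‖ ≤ 1 * ‖z j‖ := by gcongr
    _ < 1 := by simpa using hz j
  rw [h1] at this; simp at this

lemma D2_ne (hZ : ∀ k, 1 < ‖Z k‖) {w : ℂ} (hw : ‖w‖ = 1) :
    (∏ k, (w - (Z k)⁻¹)) ≠ 0 := by
  rw [Finset.prod_ne_zero_iff]
  intro k _ h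
  have h1 : w = (Z k)⁻¹ := by linear_combination h
  have h2 : ‖(Z k)⁻¹‖ < 1 := by
    rw [norm_inv]
    have := hZ k
    rw [inv_lt_one_iff₀]
    right; exact this
  rw [h1] at hw; rw [hw] at h2; norm_num at h2

lemma contSymb (nP : ℤ) (α : ℤ) (hz : ∀ j, ‖z j‖ < 1) (hZ : ∀ k, 1 < ‖Z k‖) (k : ℤ) :
    Continuous fun θ : ℝ =>
      bdiSymbol nP nz nZ z Z α (Complex.exp (Complex.I * θ)) *
        Complex.exp (-(Complex.I * (k : ℂ) * θ)) := by
  have hcw : Continuous fun θ : ℝ => Complex.exp (Complex.I * θ) :=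
    Complex.continuous_exp.comp (continuous_const.mul Complex.continuous_ofReal)
  have hck : Continuous fun θ : ℝ => Complex.exp (-(Complex.I * (k:ℂ) * θ)) :=
    Complex.continuous_exp.comp ((continuous_const.mul Complex.continuous_ofReal)).neg
  refine Continuous.mul ?_ hck
  unfold bdiSymbol
  refine Continuous.div ?_ ?_ ?_
  · refine Continuous.mul (Continuous.mul ?_ continuous_const) ?_
    · exact hcw.zpow₀ _ (fun θ => Or.inl (Complex.exp_ne_zero _))
    · exact Continuous.mul
        (continuous_finset_prod _ fun j _ => hcw.sub continuous_const)
        (continuous_finset_prod _ fun j _ => hcw.sub continuous_const)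
  · exact Continuous.mul
      (continuous_finset_prod _ fun j _ => continuous_const.sub (hcw.mul continuous_const))
      (continuous_finset_prod _ fun j _ => hcw.sub continuous_const)
  · intro θ
    exact mul_ne_zero (D1_ne hz (le_of_eq (normExp θ))) (D2_ne hZ (normExp θ))

end helpers

lemma cauchyA (A : ℂ → ℂ) (h : ∀ w ∈ closedBall (0:ℂ) 1, DifferentiableAt ℂ A w) :
    (∫ θ in (0:ℝ)..(2*Real.pi), A (Complex.exp (Complex.I * θ)) * Complex.exp (Complex.I * θ)) = 0 := by
  have h0 : (∮ w in C(0, 1), A w) = 0 :=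
    circleIntegral_eq_zero_of_differentiable_on_off_countable zero_le_one Set.countable_empty
      (fun w hw => (h w hw).continuousAt.continuousWithinAt)
      (fun w hw => h w (ball_subset_closedBall hw.1))
  have h1 : (∮ w in C(0, 1), A w)
      = Complex.I * ∫ θ in (0:ℝ)..(2*Real.pi), A (Complex.exp (Complex.I * θ)) * Complex.exp (Complex.I * θ) := by
    rw [circleIntegral, ← integral_const_mul]
    refine intervalIntegral.integral_congr fun θ _ => ?_
    simp [deriv_circleMap, circleMap, mul_comm, smul_eq_mul]
    ring
  rw [h0] at h1
  exact (mul_eq_zero.mp h1.symm).resolve_left I_ne_zero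

lemma caseA (nP : ℤ) (nz nZ : ℕ) (z : Fin nz → ℂ) (Z : Fin nZ → ℂ)
    (hz : ∀ j, ‖z j‖ < 1) (hZ : ∀ k, 1 < ‖Z k‖) (α : ℤ) (N : ℕ)
    (hE : (nZ:ℤ) + 1 ≤ (nz:ℤ) + (nZ:ℤ) - nP - α)
    (hN : (nz:ℤ) + (nZ:ℤ) - nP - α ≤ (N:ℤ)) :
    toeplitzDet (bdiSymbol nP nz nZ z Z α) N = 0 := by
  classical
  set E : ℤ := (nz:ℤ) + (nZ:ℤ) - nP - α with hEdef
  set t := bdiSymbol nP nz nZ z Z α with htdef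
  set s : ℕ := ((N:ℤ) - E).toNat with hsdef
  have hs : (s:ℤ) = (N:ℤ) - E := Int.toNat_of_nonneg (by omega)
  set Q : Polynomial ℂ := X^s * ∏ k : Fin nZ, (X - C ((Z k)⁻¹)) with hQdef
  have hQm : Q.Monic := (monic_X_pow s).mul (monic_prod_of_monic _ _ fun k _ => monic_X_sub_C _)
  have hQdeg : Q.natDegree = s + nZ := by
    rw [hQdef, Polynomial.Monic.natDegree_mul (monic_X_pow s)
      (monic_prod_of_monic _ _ fun k _ => monic_X_sub_C _), natDegree_X_pow,
      natDegree_prod _ _ (fun k _ => X_sub_C_ne_zero _)]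
    simp [natDegree_X_sub_C]
  have hlt : s + nZ < N := by omega
  set x : Fin N → ℂ := fun n => Q.coeff n with hxdef
  have hx : x ≠ 0 := by
    intro h0
    have h1 : x ⟨s + nZ, hlt⟩ = 0 := by rw [h0]; rfl
    rw [hxdef] at h1
    simp only at h1
    rw [← hQdeg] at h1
    rw [hQm.coeff_natDegree] at h1
    exact one_ne_zero h1
  rw [toeplitzDet, ← Matrix.exists_mulVec_eq_zero_iff]
  refine ⟨x, hx, ?_⟩
  funext m
  have hw0 : ∀ θ : ℝ, Complex.exp (Complex.I * θ) ≠ 0 := fun θ => Complex.exp_ne_zero _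
  -- the holomorphic function
  set PA : Polynomial ℂ := X^(N - 1 - (m:ℕ)) * C ((∏ k, (-Z k))⁻¹) *
      ((∏ j : Fin nz, (X - C (z j))) * (∏ k : Fin nZ, (X - C (Z k)))) with hPAdef
  set A : ℂ → ℂ := fun v => PA.eval v / (∏ j, (1 - v * z j)) with hAdef
  have hAdiff : ∀ w ∈ closedBall (0:ℂ) 1, DifferentiableAt ℂ A w := by
    intro w hw
    rw [mem_closedBall_zero_iff] at hw
    refine DifferentiableAt.div (Polynomial.differentiableAt _) ?_ (D1_ne hz hw)
    exact DifferentiableAt.fun_finsetProd fun j _ =>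
      (differentiableAt_const _).sub (differentiableAt_id.mul (differentiableAt_const _))
  -- pointwise identity
  have hpoint : ∀ θ : ℝ,
      (∑ n : Fin N, t (Complex.exp (Complex.I * θ)) *
        Complex.exp (-(Complex.I * (((m:ℤ) - (n:ℤ) : ℤ) : ℂ) * θ)) * x n)
      = A (Complex.exp (Complex.I * θ)) * Complex.exp (Complex.I * θ) := by
    intro θ
    set w : ℂ := Complex.exp (Complex.I * θ) with hwdef
    have hwne : w ≠ 0 := Complex.exp_ne_zero _
    have hw1 : ‖w‖ = 1 := normExp θ
    have hexpsplit : ∀ n : Fin N, Complex.exp (-(Complex.I * (((m:ℤ) - (n:ℤ) : ℤ) : ℂ) * θ))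
        = (w ^ (m:ℕ))⁻¹ * w ^ (n:ℕ) := by
      intro n
      have : (-(Complex.I * (((m:ℤ) - (n:ℤ) : ℤ) : ℂ) * θ))
          = -((m:ℕ) * (Complex.I * θ)) + (n:ℕ) * (Complex.I * θ) := by push_cast; ring
      rw [this, Complex.exp_add, Complex.exp_neg, Complex.exp_nat_mul, Complex.exp_nat_mul]
    have hsum : (∑ n : Fin N, t w *
          Complex.exp (-(Complex.I * (((m:ℤ) - (n:ℤ) : ℤ) : ℂ) * θ)) * x n)
        = t w * (w ^ (m:ℕ))⁻¹ * Q.eval w := by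
      have heval : Q.eval w = ∑ n : Fin N, Q.coeff n * w ^ (n:ℕ) := by
        rw [Polynomial.eval_eq_sum_range' (lt_of_le_of_lt (le_of_eq hQdeg) hlt) w,
          ← Fin.sum_univ_eq_sum_range (fun i => Q.coeff i * w ^ i) N]
      rw [heval, Finset.mul_sum]
      refine Finset.sum_congr rfl fun n _ => ?_
      rw [hexpsplit n]
      ring
    rw [hsum]
    -- now the rational identity
    have hD1 : (∏ j, (1 - w * z j)) ≠ 0 := D1_ne hz (le_of_eq hw1)
    have hD2 : (∏ k, (w - (Z k)⁻¹)) ≠ 0 := D2_ne hZ hw1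
    have hQev : Q.eval w = w^s * ∏ k, (w - (Z k)⁻¹) := by
      rw [hQdef]
      simp only [eval_mul, eval_pow, eval_X, eval_C, eval_prod, eval_sub]
    have hPAev : PA.eval w = w^(N - 1 - (m:ℕ)) * (∏ k, (-Z k))⁻¹ *
        ((∏ j, (w - z j)) * (∏ k, (w - Z k))) := by
      rw [hPAdef]
      simp only [eval_mul, eval_pow, eval_X, eval_C, eval_prod, eval_sub]
    have hzpow : w ^ E = w ^ (N - 1 - (m:ℕ) : ℕ) * w * w ^ (m:ℕ) / w ^ s := by
      have h1 : E = ((N - 1 - (m:ℕ) : ℕ) : ℤ) + 1 + ((m:ℕ) : ℤ) - ((s:ℕ) : ℤ) := by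
        have hmN : (m:ℕ) < N := m.isLt
        omega
      rw [h1, zpow_sub₀ hwne, zpow_add₀ hwne, zpow_add₀ hwne, zpow_one, zpow_natCast,
        zpow_natCast, zpow_natCast]
    have hwm : w ^ (m:ℕ) ≠ 0 := pow_ne_zero _ hwne
    have hws : w ^ s ≠ 0 := pow_ne_zero _ hwne
    have hcst : (∏ k : Fin nZ, (-Z k)) ≠ 0 := by
      rw [Finset.prod_ne_zero_iff]
      intro k _ h
      have h2 : Z k = 0 := neg_eq_zero.mp h
      have := hZ k; rw [h2] at this; norm_num at this
    rw [htdef, bdiSymbol, hQev]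
    show _ = PA.eval w / (∏ j, (1 - w * z j)) * w
    rw [hPAev, show ((nz:ℤ) + (nZ:ℤ) - nP - α) = E from rfl, hzpow]
    set D1 := ∏ j, (1 - w * z j) with hD1def
    set D2 := ∏ k, (w - (Z k)⁻¹) with hD2def
    set P1 := ∏ j, (w - z j) with hP1def
    set P2 := ∏ k, (w - Z k) with hP2def
    set CC := ∏ k : Fin nZ, (-Z k) with hCCdef
    field_simp
  -- assemble
  have hMx : ∀ m' : Fin N, (Matrix.of fun m n : Fin N =>
      symbolCoeff t ((m : ℤ) - (n : ℤ))).mulVec x m' = ∑ n : Fin N,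
      symbolCoeff t ((m' : ℤ) - (n : ℤ)) * x n := by
    intro m'
    rfl
  show (Matrix.of fun m n : Fin N => symbolCoeff t ((m : ℤ) - (n : ℤ))).mulVec x m = 0
  rw [hMx m]
  have hint : ∀ n : Fin N, IntervalIntegrable (fun θ : ℝ =>
      t (Complex.exp (Complex.I * θ)) *
        Complex.exp (-(Complex.I * (((m:ℤ) - (n:ℤ) : ℤ) : ℂ) * θ)) * x n)
      MeasureTheory.volume 0 (2*Real.pi) :=
    fun n => ((contSymb nP α hz hZ _).mul continuous_const).intervalIntegrable _ _
  calc (∑ n : Fin N, symbolCoeff t ((m:ℤ) - (n:ℤ)) * x n)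
      = ∑ n : Fin N, (1 / (2 * (Real.pi:ℂ))) * ∫ θ in (0:ℝ)..(2*Real.pi),
          t (Complex.exp (Complex.I * θ)) *
            Complex.exp (-(Complex.I * (((m:ℤ) - (n:ℤ) : ℤ) : ℂ) * θ)) * x n := by
        refine Finset.sum_congr rfl fun n _ => ?_
        rw [symbolCoeff, mul_assoc, ← intervalIntegral.integral_mul_const]
    _ = (1 / (2 * (Real.pi:ℂ))) * ∑ n : Fin N, ∫ θ in (0:ℝ)..(2*Real.pi),
          t (Complex.exp (Complex.I * θ)) *
            Complex.exp (-(Complex.I * (((m:ℤ) - (n:ℤ) : ℤ) : ℂ) * θ)) * x n := by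
        rw [Finset.mul_sum]
    _ = (1 / (2 * (Real.pi:ℂ))) * ∫ θ in (0:ℝ)..(2*Real.pi), ∑ n : Fin N,
          t (Complex.exp (Complex.I * θ)) *
            Complex.exp (-(Complex.I * (((m:ℤ) - (n:ℤ) : ℤ) : ℂ) * θ)) * x n := by
        rw [← intervalIntegral.integral_finset_sum (fun n _ => hint n)]
    _ = (1 / (2 * (Real.pi:ℂ))) * ∫ θ in (0:ℝ)..(2*Real.pi),
          A (Complex.exp (Complex.I * θ)) * Complex.exp (Complex.I * θ) := by
        rw [intervalIntegral.integral_congr fun θ _ => hpoint θ]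
    _ = 0 := by rw [cauchyA A hAdiff, mul_zero]

lemma cauchyB (A : ℂ → ℂ)
    (hA : (∫ θ in (0:ℝ)..(2*Real.pi), A (Complex.exp (Complex.I * θ)) * Complex.exp (Complex.I * θ)) = 0) :
    (∫ θ in (0:ℝ)..(2*Real.pi), A (Complex.exp (-(Complex.I * θ))) * Complex.exp (-(Complex.I * θ))) = 0 := by
  have hper : Function.Periodic (fun θ : ℝ => A (Complex.exp (Complex.I * θ)) * Complex.exp (Complex.I * θ)) (2*Real.pi) := by
    intro θ
    have h2 : Complex.I * ((θ:ℝ) + 2*Real.pi : ℝ) = Complex.I * θ + 2*Real.pi*Complex.I := by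
      push_cast; ring
    simp only [h2, Complex.exp_add, Complex.exp_two_pi_mul_I, mul_one]
  have h1 : (∫ θ in (0:ℝ)..(2*Real.pi), A (Complex.exp (-(Complex.I * θ))) * Complex.exp (-(Complex.I * θ)))
      = ∫ θ in (-(2*Real.pi))..(0:ℝ), A (Complex.exp (Complex.I * θ)) * Complex.exp (Complex.I * θ) := by
    have := intervalIntegral.integral_comp_neg (a := (0:ℝ)) (b := 2*Real.pi)
      (fun θ : ℝ => A (Complex.exp (Complex.I * θ)) * Complex.exp (Complex.I * θ))
    simp only [neg_zero] at this
    rw [← this]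
    refine intervalIntegral.integral_congr fun θ _ => ?_
    push_cast
    ring_nf
  rw [h1]
  have h3 := hper.intervalIntegral_add_eq (-(2*Real.pi)) 0
  simp only [neg_add_cancel, zero_add] at h3
  rw [h3, hA]

lemma prodsplit {ν : ℕ} (f g : Fin ν → ℂ) (c : ℂ) (h : ∀ i, f i = c * g i) :
    (∏ i, f i) = c ^ ν * ∏ i, g i := by
  rw [Finset.prod_congr rfl fun i _ => h i, Finset.prod_mul_distrib, Finset.prod_const,
    Finset.card_univ, Fintype.card_fin]

lemma caseB (nP : ℤ) (nz nZ : ℕ) (z : Fin nz → ℂ) (Z : Fin nZ → ℂ)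
    (hz : ∀ j, ‖z j‖ < 1) (hZ : ∀ k, 1 < ‖Z k‖) (α : ℤ) (N : ℕ)
    (hE : (nz:ℤ) + (nZ:ℤ) - nP - α ≤ -(nz:ℤ) - 1)
    (hN : -((nz:ℤ) + (nZ:ℤ) - nP - α) ≤ (N:ℤ)) :
    toeplitzDet (bdiSymbol nP nz nZ z Z α) N = 0 := by
  classical
  set E : ℤ := (nz:ℤ) + (nZ:ℤ) - nP - α with hEdef
  set t := bdiSymbol nP nz nZ z Z α with htdef
  set s : ℕ := ((N:ℤ) + E).toNat with hsdef
  have hs : (s:ℤ) = (N:ℤ) + E := Int.toNat_of_nonneg (by omega)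
  set P : Polynomial ℂ := X^s * ∏ j : Fin nz, (X - C (z j)) with hPdef
  have hPm : P.Monic := (monic_X_pow s).mul (monic_prod_of_monic _ _ fun j _ => monic_X_sub_C _)
  have hPdeg : P.natDegree = s + nz := by
    rw [hPdef, Polynomial.Monic.natDegree_mul (monic_X_pow s)
      (monic_prod_of_monic _ _ fun j _ => monic_X_sub_C _), natDegree_X_pow,
      natDegree_prod _ _ (fun j _ => X_sub_C_ne_zero _)]
    simp [natDegree_X_sub_C]
  have hlt : s + nz < N := by omega
  set x : Fin N → ℂ := fun m => P.coeff m with hxdef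
  have hx : x ≠ 0 := by
    intro h0
    have h1 : x ⟨s + nz, hlt⟩ = 0 := by rw [h0]; rfl
    rw [hxdef] at h1
    simp only at h1
    rw [← hPdeg] at h1
    rw [hPm.coeff_natDegree] at h1
    exact one_ne_zero h1
  rw [toeplitzDet, ← Matrix.exists_vecMul_eq_zero_iff]
  refine ⟨x, hx, ?_⟩
  funext n
  set PB : Polynomial ℂ := X^(N - 1 - (n:ℕ)) * C ((∏ k, (-Z k))⁻¹) *
      ((∏ j : Fin nz, (1 - C (z j) * X)) * (∏ k : Fin nZ, (1 - C (Z k) * X))) with hPBdef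
  set A : ℂ → ℂ := fun v => PB.eval v / (∏ k, (1 - v * (Z k)⁻¹)) with hAdef
  have hZinv : ∀ k, ‖(Z k)⁻¹‖ < 1 := by
    intro k
    rw [norm_inv, inv_lt_one_iff₀]
    right; exact hZ k
  have hAdiff : ∀ w ∈ closedBall (0:ℂ) 1, DifferentiableAt ℂ A w := by
    intro w hw
    rw [mem_closedBall_zero_iff] at hw
    refine DifferentiableAt.div (Polynomial.differentiableAt _) ?_ (D1_ne hZinv hw)
    exact DifferentiableAt.fun_finsetProd fun k _ =>
      (differentiableAt_const _).sub (differentiableAt_id.mul (differentiableAt_const _))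
  have hpoint : ∀ θ : ℝ,
      (∑ m : Fin N, x m * (t (Complex.exp (Complex.I * θ)) *
        Complex.exp (-(Complex.I * (((m:ℤ) - (n:ℤ) : ℤ) : ℂ) * θ))))
      = A (Complex.exp (-(Complex.I * θ))) * Complex.exp (-(Complex.I * θ)) := by
    intro θ
    set w : ℂ := Complex.exp (Complex.I * θ) with hwdef
    set v : ℂ := Complex.exp (-(Complex.I * θ)) with hvdef
    have hwne : w ≠ 0 := Complex.exp_ne_zero _
    have hvne : v ≠ 0 := Complex.exp_ne_zero _
    have hw1 : ‖w‖ = 1 := normExp θ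
    have hvw : v = w⁻¹ := by rw [hwdef, hvdef, ← Complex.exp_neg]
    have hwv : w = v⁻¹ := by rw [hvw, inv_inv]
    have hv1 : ‖v‖ = 1 := by rw [hvw, norm_inv, hw1]; norm_num
    have hexpsplit : ∀ m : Fin N, Complex.exp (-(Complex.I * (((m:ℤ) - (n:ℤ) : ℤ) : ℂ) * θ))
        = v ^ (m:ℕ) * w ^ (n:ℕ) := by
      intro m
      have h5 : (-(Complex.I * (((m:ℤ) - (n:ℤ) : ℤ) : ℂ) * θ))
          = (m:ℕ) * (-(Complex.I * θ)) + (n:ℕ) * (Complex.I * θ) := by push_cast; ring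
      rw [h5, Complex.exp_add, Complex.exp_nat_mul, Complex.exp_nat_mul, ← hwdef, ← hvdef]
    have hsum : (∑ m : Fin N, x m * (t w *
          Complex.exp (-(Complex.I * (((m:ℤ) - (n:ℤ) : ℤ) : ℂ) * θ))))
        = t w * w ^ (n:ℕ) * P.eval v := by
      have heval : P.eval v = ∑ m : Fin N, P.coeff m * v ^ (m:ℕ) := by
        rw [Polynomial.eval_eq_sum_range' (lt_of_le_of_lt (le_of_eq hPdeg) hlt) v,
          ← Fin.sum_univ_eq_sum_range (fun i => P.coeff i * v ^ i) N]
      rw [heval, Finset.mul_sum]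
      refine Finset.sum_congr rfl fun m _ => ?_
      rw [hexpsplit m]
      ring
    rw [hsum]
    have hBz : (∏ j, (v - z j)) ≠ 0 := by
      rw [Finset.prod_ne_zero_iff]
      intro j _ h
      have h1 : v = z j := by linear_combination h
      rw [h1] at hv1
      have := hz j; rw [hv1] at this; norm_num at this
    have hBD : (∏ k, (1 - v * (Z k)⁻¹)) ≠ 0 := D1_ne hZinv (le_of_eq hv1)
    have hcst : (∏ k : Fin nZ, (-Z k)) ≠ 0 := by
      rw [Finset.prod_ne_zero_iff]
      intro k _ h
      have h2 : Z k = 0 := neg_eq_zero.mp h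
      have := hZ k; rw [h2] at this; norm_num at this
    have hPeval : P.eval v = v^s * ∏ j, (v - z j) := by
      rw [hPdef]
      simp only [eval_mul, eval_pow, eval_X, eval_C, eval_prod, eval_sub]
    have hPBeval : PB.eval v = v^(N - 1 - (n:ℕ)) * (∏ k, (-Z k))⁻¹ *
        ((∏ j, (1 - z j * v)) * (∏ k, (1 - Z k * v))) := by
      rw [hPBdef]
      simp only [eval_mul, eval_pow, eval_X, eval_C, eval_prod, eval_sub, eval_one]
    have hP1 : (∏ j, (w - z j)) = (v⁻¹) ^ nz * ∏ j, (1 - z j * v) := by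
      refine prodsplit _ _ _ fun j => ?_
      rw [hvw, inv_inv, mul_sub, mul_one,
        show w * (z j * w⁻¹) = z j * (w * w⁻¹) by ring, mul_inv_cancel₀ hwne, mul_one]
    have hP2 : (∏ k, (w - Z k)) = (v⁻¹) ^ nZ * ∏ k, (1 - Z k * v) := by
      refine prodsplit _ _ _ fun k => ?_
      rw [hvw, inv_inv, mul_sub, mul_one,
        show w * (Z k * w⁻¹) = Z k * (w * w⁻¹) by ring, mul_inv_cancel₀ hwne, mul_one]
    have hD1 : (∏ j, (1 - w * z j)) = (v⁻¹) ^ nz * ∏ j, (v - z j) := by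
      refine prodsplit _ _ _ fun j => ?_
      rw [hvw, inv_inv, mul_sub, mul_inv_cancel₀ hwne]
    have hD2 : (∏ k, (w - (Z k)⁻¹)) = (v⁻¹) ^ nZ * ∏ k, (1 - v * (Z k)⁻¹) := by
      refine prodsplit _ _ _ fun k => ?_
      rw [hvw, inv_inv, mul_sub, mul_one, ← mul_assoc, mul_inv_cancel₀ hwne, one_mul]
    have hzpow : w ^ E = v ^ (N - 1 - (n:ℕ)) * v * v ^ (n:ℕ) / v ^ s := by
      have h1 : -E = ((N - 1 - (n:ℕ) : ℕ) : ℤ) + 1 + ((n:ℕ) : ℤ) - ((s:ℕ) : ℤ) := by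
        have hnN : (n:ℕ) < N := n.isLt
        omega
      calc w ^ E = (v⁻¹) ^ E := by rw [hwv]
        _ = v ^ (-E) := by rw [inv_zpow']
        _ = _ := by
            rw [h1, zpow_sub₀ hvne, zpow_add₀ hvne, zpow_add₀ hvne, zpow_one, zpow_natCast,
              zpow_natCast, zpow_natCast]
    have hwn : w ^ (n:ℕ) = (v⁻¹) ^ (n:ℕ) := by rw [hwv]
    rw [htdef, bdiSymbol, hPeval, hP1, hP2, hD1, hD2,
      show ((nz:ℤ) + (nZ:ℤ) - nP - α) = E from rfl, hzpow, hwn]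
    show _ = PB.eval v / (∏ k, (1 - v * (Z k)⁻¹)) * v
    rw [hPBeval]
    have hvs : v ^ s ≠ 0 := pow_ne_zero _ hvne
    set B1 := ∏ j, (1 - z j * v) with hB1def
    set B2 := ∏ k, (1 - Z k * v) with hB2def
    set Bz := ∏ j, (v - z j) with hBzdef
    set BD := ∏ k, (1 - v * (Z k)⁻¹) with hBDdef
    set CC := ∏ k : Fin nZ, (-Z k) with hCCdef
    have hvnz : v ^ nz ≠ 0 := pow_ne_zero _ hvne
    have hvnZ : v ^ nZ ≠ 0 := pow_ne_zero _ hvne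
    have hvn : v ^ (n:ℕ) ≠ 0 := pow_ne_zero _ hvne
    have hX : v ^ (n:ℕ) * v ^ nz * v ^ nZ * v ^ s * Bz * CC * BD ≠ 0 :=
      mul_ne_zero (mul_ne_zero (mul_ne_zero (mul_ne_zero (mul_ne_zero
        (mul_ne_zero hvn hvnz) hvnZ) hvs) hBz) hcst) hBD
    field_simp
    try simp only [inv_pow]
    linear_combination (B1 * B2) * (mul_inv_cancel₀ hvn)
  show (Matrix.vecMul x (Matrix.of fun m n : Fin N => symbolCoeff t ((m : ℤ) - (n : ℤ)))) n = 0
  have hMx : (Matrix.vecMul x (Matrix.of fun m n : Fin N => symbolCoeff t ((m : ℤ) - (n : ℤ)))) n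
      = ∑ m : Fin N, x m * symbolCoeff t ((m:ℤ) - (n:ℤ)) := rfl
  rw [hMx]
  have hint : ∀ m : Fin N, IntervalIntegrable (fun θ : ℝ =>
      x m * (t (Complex.exp (Complex.I * θ)) *
        Complex.exp (-(Complex.I * (((m:ℤ) - (n:ℤ) : ℤ) : ℂ) * θ))))
      MeasureTheory.volume 0 (2*Real.pi) :=
    fun m => (continuous_const.mul (contSymb nP α hz hZ _)).intervalIntegrable _ _
  calc (∑ m : Fin N, x m * symbolCoeff t ((m:ℤ) - (n:ℤ)))
      = ∑ m : Fin N, (1 / (2 * (Real.pi:ℂ))) * ∫ θ in (0:ℝ)..(2*Real.pi),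
          x m * (t (Complex.exp (Complex.I * θ)) *
            Complex.exp (-(Complex.I * (((m:ℤ) - (n:ℤ) : ℤ) : ℂ) * θ))) := by
        refine Finset.sum_congr rfl fun m _ => ?_
        rw [symbolCoeff, ← mul_assoc, mul_comm (x m) (1 / (2 * (Real.pi:ℂ))), mul_assoc,
          ← intervalIntegral.integral_const_mul]
    _ = (1 / (2 * (Real.pi:ℂ))) * ∑ m : Fin N, ∫ θ in (0:ℝ)..(2*Real.pi),
          x m * (t (Complex.exp (Complex.I * θ)) *
            Complex.exp (-(Complex.I * (((m:ℤ) - (n:ℤ) : ℤ) : ℂ) * θ))) := by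
        rw [Finset.mul_sum]
    _ = (1 / (2 * (Real.pi:ℂ))) * ∫ θ in (0:ℝ)..(2*Real.pi), ∑ m : Fin N,
          x m * (t (Complex.exp (Complex.I * θ)) *
            Complex.exp (-(Complex.I * (((m:ℤ) - (n:ℤ) : ℤ) : ℂ) * θ))) := by
        rw [← intervalIntegral.integral_finset_sum (fun m _ => hint m)]
    _ = (1 / (2 * (Real.pi:ℂ))) * ∫ θ in (0:ℝ)..(2*Real.pi),
          A (Complex.exp (-(Complex.I * θ))) * Complex.exp (-(Complex.I * θ)) := by
        rw [intervalIntegral.integral_congr fun θ _ => hpoint θ]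
    _ = 0 := by rw [cauchyB A (cauchyA A hAdiff), mul_zero]

/-- Theorem 1, part 1: vanishing of off-critical string correlators in class BDI. -/
theorem bdi_string_correlator_vanishes
    (nP : ℤ) (nz nZ : ℕ) (hnznZ : 1 ≤ nz + nZ)
    (z : Fin nz → ℂ) (Z : Fin nZ → ℂ)
    (hz : ∀ j, 0 < ‖z j‖ ∧ ‖z j‖ < 1) (hZ : ∀ k, 1 < ‖Z k‖)
    (hconjz : ∃ σ : Equiv.Perm (Fin nz), ∀ j, z (σ j) = (starRingEnd ℂ) (z j))
    (hconjZ : ∃ σ : Equiv.Perm (Fin nZ), ∀ k, Z (σ k) = (starRingEnd ℂ) (Z k))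
    (hgen : Function.Injective
      (Sum.elim (Sum.elim z fun j => (z j)⁻¹) (Sum.elim Z fun k => (Z k)⁻¹)))
    (α : ℤ)
    (hα : α < 2 * (nz : ℤ) - nP - nz ∨ 2 * (nz : ℤ) - nP + nZ < α)
    (N : ℕ) (hN : max |(nz : ℤ) + (nZ : ℤ) - nP - α| 1 ≤ (N : ℤ)) :
    toeplitzDet (bdiSymbol nP nz nZ z Z α) N = 0 := by
  rcases hα with h1 | h2
  · have hE : (nZ:ℤ) + 1 ≤ (nz:ℤ) + (nZ:ℤ) - nP - α := by omega
    have hEN : (nz:ℤ) + (nZ:ℤ) - nP - α ≤ (N:ℤ) :=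
      le_trans (le_trans (le_abs_self _) (le_max_left _ _)) hN
    exact caseA nP nz nZ z Z (fun j => (hz j).2) hZ α N hE hEN
  · have hE : (nz:ℤ) + (nZ:ℤ) - nP - α ≤ -(nz:ℤ) - 1 := by omega
    have hEN : -((nz:ℤ) + (nZ:ℤ) - nP - α) ≤ (N:ℤ) :=
      le_trans (le_trans (neg_le_abs _) (le_max_left _ _)) hN
    exact caseB nP nz nZ z Z (fun j => (hz j).2) hZ α N hE hEN
end

section
/- Edge-case string correlators are exactly geometric (Theorem 1, edge cases). (i) Let n_z ≥ 1 and z_1,…,z_{n_z} ∈ ℂ with 0 < |z_j| < 1 for all j, and let u be the symbol u(z) = ∏_{j=1}^{n_z} (z − z_j)/(1 − z·z_j) on the unit circle. Then for every integer N ≥ 1, D_N[u] = ∏_{j=1}^{n_z} (−z_j)^N. (ii) Let n_Z ≥ 1 and Z_1,…,Z_{n_Z} ∈ ℂ with |Z_k| > 1 for all k, and let v be the symbol v(z) = ∏_{k=1}^{n_Z} (z − Z_k) / ( (−Z_k)(z − Z_k^{-1}) ) on the unit circle. Then for every integer N ≥ 1, D_N[v] = ∏_{k=1}^{n_Z} (−Z_k)^{−N}.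 (These are the BDI string symbols t_α at α = n_z − n_P with n_Z = 0, and at α = n_Z − n_P with n_z = 0, respectively.) -/
open scoped BigOperators
open Filter

/-- Cauchy-type computation: integral of `f(e^{iθ}) e^{imθ}` for analytic `f` and `m ≥ 0`. -/
lemma cauchy_power (f : ℂ → ℂ) (hf : DifferentiableOn ℂ f (Metric.closedBall 0 1)) (m : ℕ) :
    (∫ θ in (0:ℝ)..(2 * Real.pi),
        f (Complex.exp (Complex.I * (θ : ℂ))) * Complex.exp (Complex.I * (m : ℂ) * (θ : ℂ)))
      = if m = 0 then 2 * Real.pi * f 0 else 0 := by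
  have hg : DiffContOnCl ℂ (fun z => z ^ m * f z) (Metric.ball 0 1) := by
    apply DifferentiableOn.diffContOnCl
    rw [closure_ball (0:ℂ) one_ne_zero]
    exact (differentiableOn_id.pow m).mul hf
  have h0 : (0:ℂ) ∈ Metric.ball (0:ℂ) 1 := by simp
  have key := hg.circleIntegral_sub_inv_smul h0
  rw [circleIntegral] at key
  have hint : ∀ θ : ℝ, deriv (circleMap 0 1) θ •
      ((circleMap 0 1 θ - 0)⁻¹ • ((circleMap 0 1 θ) ^ m * f (circleMap 0 1 θ)))
      = Complex.I * (f (Complex.exp (Complex.I * (θ:ℂ))) * Complex.exp (Complex.I * (m:ℂ) * (θ:ℂ))) := by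
    intro θ
    have hc : circleMap 0 1 θ = Complex.exp (Complex.I * (θ:ℂ)) := by
      simp [circleMap, mul_comm]
    have hne : Complex.exp (Complex.I * (θ:ℂ)) ≠ 0 := Complex.exp_ne_zero _
    have hpow : Complex.exp (Complex.I * (θ:ℂ)) ^ m = Complex.exp (Complex.I * (m:ℂ) * (θ:ℂ)) := by
      rw [← Complex.exp_nat_mul]; ring_nf
    rw [deriv_circleMap, hc]
    simp only [smul_eq_mul, circleMap_zero, Complex.ofReal_one, one_mul, sub_zero]
    rw [hpow]
    field_simp
  simp only [hint] at key
  rw [intervalIntegral.integral_const_mul] at key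
  have hI : (Complex.I : ℂ) ≠ 0 := Complex.I_ne_zero
  have key2 : (∫ θ in (0:ℝ)..(2 * Real.pi),
      f (Complex.exp (Complex.I * (θ:ℂ))) * Complex.exp (Complex.I * (m:ℂ) * (θ:ℂ)))
      = 2 * Real.pi * ((0:ℂ) ^ m * f 0) := by
    have h := key
    rw [smul_eq_mul] at h
    apply mul_left_cancel₀ hI
    rw [h]; ring
  rw [key2]
  rcases Nat.eq_zero_or_pos m with hm | hm
  · simp [hm]
  · simp [hm.ne', zero_pow hm.ne']

/-- The Fourier coefficients of index `k ≤ 0` of an analytic symbol. -/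
lemma symbolCoeff_analytic (f : ℂ → ℂ) (hf : DifferentiableOn ℂ f (Metric.closedBall 0 1))
    (k : ℤ) (hk : k ≤ 0) : symbolCoeff f k = if k = 0 then f 0 else 0 := by
  set m : ℕ := (-k).toNat with hm
  have hmk : ((m : ℤ) : ℂ) = -(k : ℂ) := by
    rw [hm, Int.toNat_of_nonneg (neg_nonneg.mpr hk)]; push_cast; ring
  have hmc : (m : ℂ) = -(k : ℂ) := by exact_mod_cast hmk
  have hintg : ∀ θ : ℝ, Complex.exp (-(Complex.I * (k:ℂ) * (θ:ℂ)))
      = Complex.exp (Complex.I * (m:ℂ) * (θ:ℂ)) := by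
    intro θ; rw [hmc]; ring_nf
  rw [symbolCoeff]
  simp only [hintg]
  rw [cauchy_power f hf m]
  have hk0 : m = 0 ↔ k = 0 := by
    constructor
    · intro h
      have : (-k).toNat = 0 := h
      omega
    · intro h; simp [hm, h]
  have hpi : (2 * Real.pi : ℂ) ≠ 0 := by
    simp [Real.pi_ne_zero]
  by_cases h : k = 0
  · simp only [hk0.mpr h, if_true, h, if_pos]
    rw [div_mul_eq_mul_div, one_mul]
    field_simp
  · rw [if_neg (fun hh => h (hk0.mp hh)), if_neg h, mul_zero]

/-- Relating the coefficients of a symbol to those of its inversion `w ↦ t w⁻¹`. -/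
lemma symbolCoeff_inv (t V : ℂ → ℂ) (h : ∀ w : ℂ, ‖w‖ = 1 → t w⁻¹ = V w) (k : ℤ) :
    symbolCoeff t k = symbolCoeff V (-k) := by
  rw [symbolCoeff, symbolCoeff]
  congr 1
  have hsub := intervalIntegral.integral_comp_sub_left
    (a := (0:ℝ)) (b := 2 * Real.pi)
    (fun θ : ℝ => t (Complex.exp (Complex.I * (θ:ℂ))) * Complex.exp (-(Complex.I * (k:ℂ) * (θ:ℂ))))
    (2 * Real.pi)
  simp only [sub_self, sub_zero] at hsub
  rw [← hsub]
  apply intervalIntegral.integral_congr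
  intro θ _
  have hnorm : ‖Complex.exp (Complex.I * (θ:ℂ))‖ = 1 := by
    rw [mul_comm, Complex.norm_exp_ofReal_mul_I]
  have hinv : Complex.exp (Complex.I * ((2 * Real.pi - θ : ℝ) : ℂ))
      = (Complex.exp (Complex.I * (θ:ℂ)))⁻¹ := by
    rw [← Complex.exp_neg]
    have : Complex.I * ((2 * Real.pi - θ : ℝ) : ℂ)
        = -(Complex.I * (θ:ℂ)) + 2 * Real.pi * Complex.I := by push_cast; ring
    rw [this, Complex.exp_add, Complex.exp_two_pi_mul_I, mul_one]
  have hexp : Complex.exp (-(Complex.I * (k:ℂ) * ((2 * Real.pi - θ : ℝ) : ℂ)))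
      = Complex.exp (-(Complex.I * ((-k : ℤ):ℂ) * (θ:ℂ))) := by
    have h1 : -(Complex.I * (k:ℂ) * ((2 * Real.pi - θ : ℝ) : ℂ))
        = -(Complex.I * ((-k : ℤ):ℂ) * (θ:ℂ)) + (-k : ℤ) * (2 * Real.pi * Complex.I) := by
      push_cast; ring
    rw [h1, Complex.exp_add, Complex.exp_int_mul_two_pi_mul_I, mul_one]
  simp only [hinv, hexp, h _ hnorm]

/-- Theorem 1, edge cases: the string correlators are exactly geometric when all zeros
lie on one side of the unit circle. -/
theorem bdi_string_correlator_edge_cases :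
    (∀ (nz : ℕ), 1 ≤ nz → ∀ z : Fin nz → ℂ, (∀ j, 0 < ‖z j‖ ∧ ‖z j‖ < 1) →
      ∀ N : ℕ, 1 ≤ N →
        toeplitzDet (fun w => ∏ j, ((w - z j) / (1 - w * z j))) N
          = ∏ j, (-z j) ^ N) ∧
    (∀ (nZ : ℕ), 1 ≤ nZ → ∀ Z : Fin nZ → ℂ, (∀ k, 1 < ‖Z k‖) →
      ∀ N : ℕ, 1 ≤ N →
        toeplitzDet (fun w => ∏ k, ((w - Z k) / ((-Z k) * (w - (Z k)⁻¹)))) N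
          = ∏ k, (-Z k) ^ (-(N : ℤ))) := by
  constructor
  · -- Part (i): zeros inside the unit circle
    intro nz _ z hz N _
    set u : ℂ → ℂ := fun w => ∏ j, ((w - z j) / (1 - w * z j)) with hu
    have hdiff : DifferentiableOn ℂ u (Metric.closedBall 0 1) := by
      apply DifferentiableOn.fun_finsetProd
      intro j _
      apply DifferentiableOn.div
      · exact differentiableOn_id.sub (differentiableOn_const _)
      · exact (differentiableOn_const _).sub (differentiableOn_id.mul (differentiableOn_const _))
      · intro w hw hzero
        have h1 : w * z j = 1 := by linear_combination -hzero
        have hwn : ‖w‖ ≤ 1 := by simpa [Metric.mem_closedBall] using hw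
        have : ‖w * z j‖ < 1 := by
          calc ‖w * z j‖ = ‖w‖ * ‖z j‖ := norm_mul _ _
            _ ≤ 1 * ‖z j‖ := by gcongr
            _ = ‖z j‖ := one_mul _
            _ < 1 := (hz j).2
        rw [h1] at this; simp at this
    have h0 : symbolCoeff u 0 = ∏ j, (-z j) := by
      rw [symbolCoeff_analytic u hdiff 0 le_rfl, if_pos rfl, hu]
      simp
    rw [toeplitzDet, Matrix.det_of_lowerTriangular]
    · simp only [Matrix.of_apply, sub_self, h0]
      rw [Finset.prod_const, Finset.card_univ, Fintype.card_fin, ← Finset.prod_pow]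
    · intro i j hij
      have hij' : (i : ℤ) - (j : ℤ) < 0 := by
        have : (i : ℕ) < (j : ℕ) := hij
        omega
      rw [Matrix.of_apply, symbolCoeff_analytic u hdiff _ hij'.le, if_neg hij'.ne]
  · -- Part (ii): zeros outside the unit circle
    intro nZ _ Z hZ N _
    set v : ℂ → ℂ := fun w => ∏ k, ((w - Z k) / ((-Z k) * (w - (Z k)⁻¹))) with hv
    set V : ℂ → ℂ := fun w => ∏ k, ((1 - Z k * w) / (w - Z k)) with hV
    have hZne : ∀ k, Z k ≠ 0 := fun k hk => by
      have := hZ k; rw [hk, norm_zero] at this; linarith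
    have hinv : ∀ w : ℂ, ‖w‖ = 1 → v w⁻¹ = V w := by
      intro w hw
      rw [hv, hV]
      apply Finset.prod_congr rfl
      intro k _
      have hw0 : w ≠ 0 := by intro h; rw [h] at hw; simp at hw
      have hwZ : w ≠ Z k := by
        intro h; rw [h] at hw; exact absurd hw (ne_of_lt (hZ k)).symm
      have h1 : w - Z k ≠ 0 := sub_ne_zero.mpr hwZ
      have hnum : w⁻¹ - Z k = (1 - Z k * w) * w⁻¹ := by
        field_simp
      have hden : (-Z k) * (w⁻¹ - (Z k)⁻¹) = (w - Z k) * w⁻¹ := by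
        field_simp [hZne k]
        ring
      rw [hnum, hden, mul_div_mul_right _ _ (inv_ne_zero hw0)]
    have hdiffV : DifferentiableOn ℂ V (Metric.closedBall 0 1) := by
      apply DifferentiableOn.fun_finsetProd
      intro k _
      apply DifferentiableOn.div
      · exact (differentiableOn_const _).sub ((differentiableOn_const _).mul differentiableOn_id)
      · exact differentiableOn_id.sub (differentiableOn_const _)
      · intro w hw hzero
        have hwn : ‖w‖ ≤ 1 := by simpa [Metric.mem_closedBall] using hw
        have : w = Z k := by linear_combination hzero
        rw [this] at hwn
        exact absurd hwn (not_le.mpr (hZ k))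
    have hcoeff : ∀ k : ℤ, 0 ≤ k → symbolCoeff v k = if k = 0 then V 0 else 0 := by
      intro k hk
      rw [symbolCoeff_inv v V hinv k,
        symbolCoeff_analytic V hdiffV (-k) (by omega)]
      simp only [neg_eq_zero]
    have hV0 : V 0 = ∏ k, (-Z k)⁻¹ := by
      rw [hV]
      apply Finset.prod_congr rfl
      intro k _
      simp [one_div]
    rw [toeplitzDet, Matrix.det_of_upperTriangular]
    · have hdiag : ∀ i : Fin N, symbolCoeff v ((i:ℤ) - (i:ℤ)) = ∏ k, (-Z k)⁻¹ := by
        intro i; rw [sub_self, hcoeff 0 le_rfl, if_pos rfl, hV0]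
      simp only [Matrix.of_apply, hdiag]
      rw [Finset.prod_const, Finset.card_univ, Fintype.card_fin, ← Finset.prod_pow]
      apply Finset.prod_congr rfl
      intro k _
      rw [zpow_neg, zpow_natCast, inv_pow]
    · intro i j hij
      have hj : (j : ℕ) < (i : ℕ) := hij
      rw [Matrix.of_apply, hcoeff _ (by omega), if_neg (by omega)]
end

section
/- Lemma 1 (vanishing of degenerate contributions in the ε-limit of Day's formula). Let p, q ≥ 1 and s ≥ p + q be integers, and let 1 ≤ κ ≤ s. Let τ_1,…,τ_{s−κ} be nonzero, pairwise distinct complex numbers, let x_1,…,x_κ be nonzero, pairwise distinct complex numbers, let ρ ∈ ℂ, let δ_1,…,δ_p ∈ ℂ with |δ_m| < 1, and let γ_1,…,γ_q ∈ ℂ with |γ_l| > 1. For ε > 0 define τ_j(ε) = τ_j for 1 ≤ j ≤ s−κ and τ_{s−κ+i}(ε) = ε·x_i for 1 ≤ i ≤ κ, and for a subset M ⊆ {1,…,s} with |M| = p and all ε > 0 small enough that τ_1(ε),…,τ_s(ε) are pairwise distinct, define (with M^c = {1,…,s} ∖ M) r_M(ε) = (−1)^{s−p} ρ ∏_{k∈M^c}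 τ_k(ε) and C_M(ε) = [∏_{k∈M^c} ∏_{m=1}^{p} (τ_k(ε) − δ_m)] · [∏_{l=1}^{q} ∏_{j∈M} (γ_l − τ_j(ε))] · [∏_{l=1}^{q} ∏_{m=1}^{p} (γ_l − δ_m)^{-1}] · [∏_{k∈M^c} ∏_{j∈M} (τ_k(ε) − τ_j(ε))^{-1}]. If M^c contains at least one index in {s−κ+1,…,s}, then for every integer N ≥ κ one has lim_{ε→0⁺} C_M(ε) · r_M(ε)^N = 0. -/
open scoped BigOperators
open Filter

/-- **Lemma 1**: vanishing of degenerate contributions in the `ε → 0⁺` limit of Day's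
formula.  We write `s = sk + κ`, with `τ_1, …, τ_{sk}` the fixed nonzero pairwise distinct
zeros and `ε·x_1, …, ε·x_κ` the zeros tending to `0`.  If the complement `Mᶜ` contains at
least one index from the second block, then for every `N ≥ κ` the contribution
`C_M(ε) · r_M(ε)^N` tends to `0` as `ε → 0⁺`. -/
theorem day_degenerate_contribution_vanishes
    (sk κ p q : ℕ) (hp : 1 ≤ p) (hq : 1 ≤ q) (hκ : 1 ≤ κ) (hs : p + q ≤ sk + κ)
    (τ : Fin sk → ℂ) (hτ0 : ∀ j, τ j ≠ 0) (hτinj : Function.Injective τ)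
    (x : Fin κ → ℂ) (hx0 : ∀ i, x i ≠ 0) (hxinj : Function.Injective x)
    (ρ : ℂ) (δ : Fin p → ℂ) (hδ : ∀ m, ‖δ m‖ < 1)
    (γ : Fin q → ℂ) (hγ : ∀ l, 1 < ‖γ l‖)
    (M : Finset (Fin (sk + κ))) (hM : M.card = p)
    (hMc : ∃ i : Fin κ, Fin.natAdd sk i ∈ Mᶜ)
    (N : ℕ) (hN : κ ≤ N) :
    Tendsto
      (fun ε : ℝ =>
        let τε : Fin (sk + κ) → ℂ := Fin.append τ (fun i => (ε : ℂ) * x i)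
        ((∏ k ∈ Mᶜ, ∏ m, (τε k - δ m)) *
         (∏ l, ∏ j ∈ M, (γ l - τε j)) *
         (∏ l, ∏ m, (γ l - δ m)⁻¹) *
         (∏ k ∈ Mᶜ, ∏ j ∈ M, (τε k - τε j)⁻¹)) *
        ((-1 : ℂ) ^ (sk + κ - p) * ρ * ∏ k ∈ Mᶜ, τε k) ^ N)
      (nhdsWithin (0 : ℝ) (Set.Ioi 0)) (nhds 0) := by
  classical
  -- notation
  set L := nhdsWithin (0 : ℝ) (Set.Ioi 0) with hL
  set χ : Fin (sk + κ) → ℕ := Fin.append (fun _ => 0) (fun _ => 1) with hχdef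
  set τ1 : Fin (sk + κ) → ℂ := Fin.append τ x with hτ1def
  set τf : ℝ → Fin (sk + κ) → ℂ := fun ε => Fin.append τ (fun i => (ε : ℂ) * x i) with hτfdef
  have happ : ∀ (ε : ℝ) k, τf ε k = (ε : ℂ) ^ (χ k) * τ1 k := by
    intro ε k
    induction k using Fin.addCases with
    | left i => simp [hτfdef, hχdef, hτ1def, Fin.append_left]
    | right i => simp [hτfdef, hχdef, hτ1def, Fin.append_right]
  set d : ℝ → Fin (sk + κ) → Fin (sk + κ) → ℂ := fun ε k j =>
    if sk ≤ (k : ℕ) ∧ sk ≤ (j : ℕ) then τ1 k - τ1 j else τf ε k - τf ε j with hddef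
  have hd : ∀ (ε : ℝ) k j, τf ε k - τf ε j = (ε : ℂ) ^ (χ k * χ j) * d ε k j := by
    intro ε k j
    induction k using Fin.addCases with
    | left i =>
        have hi : ¬ (sk ≤ ((Fin.castAdd κ i : Fin (sk + κ)) : ℕ) ∧ sk ≤ (j : ℕ)) := by
          rw [Fin.coe_castAdd]; have := i.isLt; omega
        simp only [hddef]
        rw [if_neg hi]
        simp [hχdef, Fin.append_left]
    | right i =>
        induction j using Fin.addCases with
        | left i' =>
            have hi : ¬ (sk ≤ ((Fin.natAdd sk i : Fin (sk + κ)) : ℕ) ∧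
                sk ≤ ((Fin.castAdd κ i' : Fin (sk + κ)) : ℕ)) := by
              rw [Fin.coe_castAdd]; have := i'.isLt; omega
            simp only [hddef]
            rw [if_neg hi]
            simp [hχdef, Fin.append_left, Fin.append_right]
        | right i' =>
            have hi : (sk ≤ ((Fin.natAdd sk i : Fin (sk + κ)) : ℕ) ∧
                sk ≤ ((Fin.natAdd sk i' : Fin (sk + κ)) : ℕ)) := by
              constructor <;> (rw [Fin.coe_natAdd]; omega)
            simp only [hddef]
            rw [if_pos hi]
            simp only [hχdef, hτ1def, hτfdef, Fin.append_right]
            ring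
  -- the exponents
  set b : ℕ := ∑ k ∈ Mᶜ, χ k with hbdef
  set a' : ℕ := ∑ j ∈ M, χ j with ha'def
  have hba' : a' + b = κ := by
    have h1 : ∑ k ∈ M, χ k + ∑ k ∈ Mᶜ, χ k = ∑ k, χ k := Finset.sum_add_sum_compl M χ
    have h2 : ∑ k, χ k = κ := by
      rw [Fin.sum_univ_add]
      simp [hχdef, Fin.append_left, Fin.append_right]
    rw [← ha'def, ← hbdef] at h1; omega
  have hb1 : 1 ≤ b := by
    obtain ⟨i, hi⟩ := hMc
    have : χ (Fin.natAdd sk i) ≤ b := by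
      apply Finset.single_le_sum (f := χ) (fun _ _ => Nat.zero_le _) hi
    simpa [hχdef, Fin.append_right] using this
  have ha'N : a' < N := by omega
  set e : ℕ := b * N - b * a' with hedef
  have hlt : b * a' < b * N := by
    have h1 : b * (a' + 1) ≤ b * N := Nat.mul_le_mul_left b (Nat.succ_le_of_lt ha'N)
    have h2 : b * a' + b = b * (a' + 1) := by ring
    omega
  have he : e + b * a' = b * N := by
    rw [hedef]
    exact Nat.sub_add_cancel (le_of_lt hlt)
  have he1 : 1 ≤ e := by
    rw [hedef]
    exact Nat.le_sub_of_add_le (by omega)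
  -- G
  set C1 : ℂ := ∏ k ∈ Mᶜ, τ1 k with hC1def
  set G : ℝ → ℂ := fun ε =>
    ((∏ k ∈ Mᶜ, ∏ m, (τf ε k - δ m)) *
     (∏ l, ∏ j ∈ M, (γ l - τf ε j)) *
     (∏ l, ∏ m, (γ l - δ m)⁻¹) *
     (∏ k ∈ Mᶜ, ∏ j ∈ M, (d ε k j)⁻¹)) *
    ((-1 : ℂ) ^ (sk + κ - p) * ρ * C1) ^ N with hGdef
  -- the key identity on Ioi 0
  have heq : ∀ ε ∈ Set.Ioi (0 : ℝ),
      ((∏ k ∈ Mᶜ, ∏ m, (τf ε k - δ m)) *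
       (∏ l, ∏ j ∈ M, (γ l - τf ε j)) *
       (∏ l, ∏ m, (γ l - δ m)⁻¹) *
       (∏ k ∈ Mᶜ, ∏ j ∈ M, (τf ε k - τf ε j)⁻¹)) *
      ((-1 : ℂ) ^ (sk + κ - p) * ρ * ∏ k ∈ Mᶜ, τf ε k) ^ N
      = (ε : ℂ) ^ e * G ε := by
    intro ε hε
    have hεne : ((ε : ℂ)) ≠ 0 := by
      simp only [ne_eq, Complex.ofReal_eq_zero]
      exact ne_of_gt hε
    have h1 : ∏ k ∈ Mᶜ, τf ε k = (ε : ℂ) ^ b * C1 := by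
      rw [Finset.prod_congr rfl (fun k _ => happ ε k), Finset.prod_mul_distrib,
        Finset.prod_pow_eq_pow_sum, ← hbdef, ← hC1def]
    have h2 : ∏ k ∈ Mᶜ, ∏ j ∈ M, (τf ε k - τf ε j)⁻¹
        = ((ε : ℂ) ^ (b * a'))⁻¹ * ∏ k ∈ Mᶜ, ∏ j ∈ M, (d ε k j)⁻¹ := by
      have : ∀ k ∈ Mᶜ, ∏ j ∈ M, (τf ε k - τf ε j)⁻¹
          = (∏ j ∈ M, ((ε : ℂ) ^ (χ k * χ j))⁻¹) * ∏ j ∈ M, (d ε k j)⁻¹ := by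
        intro k _
        rw [← Finset.prod_mul_distrib]
        exact Finset.prod_congr rfl (fun j _ => by rw [hd ε k j, mul_inv])
      rw [Finset.prod_congr rfl this, Finset.prod_mul_distrib]
      congr 1
      have hptw : ∀ k ∈ Mᶜ, ∏ j ∈ M, ((ε : ℂ) ^ (χ k * χ j))⁻¹
          = ((ε : ℂ)⁻¹) ^ ∑ j ∈ M, χ k * χ j := by
        intro k _
        rw [← Finset.prod_pow_eq_pow_sum]
        exact Finset.prod_congr rfl (fun j _ => by rw [inv_pow])
      rw [Finset.prod_congr rfl hptw, Finset.prod_pow_eq_pow_sum, ← Finset.sum_mul_sum,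
        ← hbdef, ← ha'def, inv_pow]
    rw [h1, h2, hGdef]
    have hpow : (ε : ℂ) ^ (b * N) = (ε : ℂ) ^ e * (ε : ℂ) ^ (b * a') := by
      rw [← pow_add, he]
    have expand : ((-1 : ℂ) ^ (sk + κ - p) * ρ * ((ε : ℂ) ^ b * C1)) ^ N
        = (ε : ℂ) ^ (b * N) * ((-1 : ℂ) ^ (sk + κ - p) * ρ * C1) ^ N := by
      rw [show ((-1 : ℂ) ^ (sk + κ - p) * ρ * ((ε : ℂ) ^ b * C1))
          = (ε : ℂ) ^ b * ((-1 : ℂ) ^ (sk + κ - p) * ρ * C1) by ring,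
        mul_pow, ← pow_mul]
    rw [expand, hpow]
    have hinv : (ε : ℂ) ^ (b * a') * ((ε : ℂ) ^ (b * a'))⁻¹ = 1 :=
      mul_inv_cancel₀ (pow_ne_zero _ hεne)
    calc ((∏ k ∈ Mᶜ, ∏ m, (τf ε k - δ m)) *
       (∏ l, ∏ j ∈ M, (γ l - τf ε j)) *
       (∏ l, ∏ m, (γ l - δ m)⁻¹) *
       (((ε : ℂ) ^ (b * a'))⁻¹ * ∏ k ∈ Mᶜ, ∏ j ∈ M, (d ε k j)⁻¹)) *
      ((ε : ℂ) ^ e * (ε : ℂ) ^ (b * a') * ((-1 : ℂ) ^ (sk + κ - p) * ρ * C1) ^ N)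
        = ((ε : ℂ) ^ (b * a') * ((ε : ℂ) ^ (b * a'))⁻¹) *
          ((ε : ℂ) ^ e * (((∏ k ∈ Mᶜ, ∏ m, (τf ε k - δ m)) *
           (∏ l, ∏ j ∈ M, (γ l - τf ε j)) *
           (∏ l, ∏ m, (γ l - δ m)⁻¹) *
           (∏ k ∈ Mᶜ, ∏ j ∈ M, (d ε k j)⁻¹)) *
          ((-1 : ℂ) ^ (sk + κ - p) * ρ * C1) ^ N)) := by ring
      _ = (ε : ℂ) ^ e * G ε := by rw [hinv, one_mul, hGdef]
  -- limits
  have hcoe : Tendsto (fun ε : ℝ => (ε : ℂ)) L (nhds 0) := by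
    have := Complex.continuous_ofReal.tendsto 0
    simpa using this.mono_left nhdsWithin_le_nhds
  have hτfk : ∀ k, Tendsto (fun ε : ℝ => τf ε k) L (nhds ((0 : ℂ) ^ (χ k) * τ1 k)) := by
    intro k
    have := (hcoe.pow (χ k)).mul (tendsto_const_nhds (x := τ1 k))
    exact this.congr (fun ε => (happ ε k).symm)
  -- limit of d
  have hdlim : ∀ k j, Tendsto (fun ε : ℝ => d ε k j) L (nhds (d 0 k j)) := by
    intro k j
    by_cases h : sk ≤ (k : ℕ) ∧ sk ≤ (j : ℕ)
    · simp only [hddef, if_pos h]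
      exact tendsto_const_nhds
    · simp only [hddef, if_neg h]
      rw [happ 0 k, happ 0 j]
      exact (hτfk k).sub (hτfk j)
  -- nonvanishing of d 0
  have hdne : ∀ k ∈ Mᶜ, ∀ j ∈ M, d 0 k j ≠ 0 := by
    intro k hk j hj
    have hkj : k ≠ j := by
      intro h; rw [h] at hk; exact (Finset.mem_compl.mp hk) hj
    induction k using Fin.addCases with
    | left i =>
        have hi : ¬ (sk ≤ ((Fin.castAdd κ i : Fin (sk + κ)) : ℕ) ∧ sk ≤ (j : ℕ)) := by
          rw [Fin.coe_castAdd]; have := i.isLt; omega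
        simp only [hddef]
        rw [if_neg hi]
        simp only [hτfdef, Fin.append_left]
        induction j using Fin.addCases with
        | left i' =>
            simp only [Fin.append_left]
            refine sub_ne_zero.mpr (fun hc => hkj ?_)
            have := hτinj hc; rw [this]
        | right i' =>
            simp only [Fin.append_right]
            simpa using hτ0 i
    | right i =>
        induction j using Fin.addCases with
        | left i' =>
            have hi : ¬ (sk ≤ ((Fin.natAdd sk i : Fin (sk + κ)) : ℕ) ∧
                sk ≤ ((Fin.castAdd κ i' : Fin (sk + κ)) : ℕ)) := by
              rw [Fin.coe_castAdd]; have := i'.isLt; omega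
            simp only [hddef]
            rw [if_neg hi]
            simp only [hτfdef, Fin.append_left, Fin.append_right]
            simpa using hτ0 i'
        | right i' =>
            have hi : (sk ≤ ((Fin.natAdd sk i : Fin (sk + κ)) : ℕ) ∧
                sk ≤ ((Fin.natAdd sk i' : Fin (sk + κ)) : ℕ)) := by
              constructor <;> (rw [Fin.coe_natAdd]; omega)
            simp only [hddef]
            rw [if_pos hi]
            simp only [hτ1def, Fin.append_right]
            refine sub_ne_zero.mpr (fun hc => hkj ?_)
            have := hxinj hc; rw [this]
  -- limit of G
  have hG : Tendsto G L (nhds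
      (((∏ k ∈ Mᶜ, ∏ m, ((0 : ℂ) ^ (χ k) * τ1 k - δ m)) *
        (∏ l, ∏ j ∈ M, (γ l - (0 : ℂ) ^ (χ j) * τ1 j)) *
        (∏ l, ∏ m, (γ l - δ m)⁻¹) *
        (∏ k ∈ Mᶜ, ∏ j ∈ M, (d 0 k j)⁻¹)) *
       ((-1 : ℂ) ^ (sk + κ - p) * ρ * C1) ^ N)) := by
    apply Tendsto.mul _ tendsto_const_nhds
    apply Tendsto.mul
    apply Tendsto.mul
    apply Tendsto.mul
    · exact tendsto_finset_prod _ (fun k _ => tendsto_finset_prod _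
        (fun m _ => (hτfk k).sub tendsto_const_nhds))
    · exact tendsto_finset_prod _ (fun l _ => tendsto_finset_prod _
        (fun j _ => tendsto_const_nhds.sub (hτfk j)))
    · exact tendsto_const_nhds
    · exact tendsto_finset_prod _ (fun k hk => tendsto_finset_prod _
        (fun j hj => (hdlim k j).inv₀ (hdne k hk j hj)))
  -- combine
  have hpowlim : Tendsto (fun ε : ℝ => (ε : ℂ) ^ e) L (nhds 0) := by
    have := hcoe.pow e
    rwa [zero_pow (by omega)] at this
  have hmain : Tendsto (fun ε : ℝ => (ε : ℂ) ^ e * G ε) L (nhds 0) := by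
    have := hpowlim.mul hG
    rwa [zero_mul] at this
  refine hmain.congr' ?_
  filter_upwards [self_mem_nhdsWithin] with ε hε
  exact (heq ε hε).symm
end

section
/- Factorization of the block Toeplitz determinant with off-diagonal symbol (equation for det A_N). Let u be any integrable complex-valued function on the unit circle, and let Φ be the 2×2-matrix-valued symbol on the unit circle defined by Φ(e^{iθ}) = [[0, u(e^{iθ})], [−u(e^{−iθ}), 0]]. Then for every integer N ≥ 1, D_N[Φ] = (D_N[u])². -/
open scoped BigOperators
open Filter

/-- The `k`-th (matrix) Fourier coefficient of a `2 × 2`-matrix-valued symbol. -/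
noncomputable def blockSymbolCoeff (Φ : ℂ → Matrix (Fin 2) (Fin 2) ℂ) (k : ℤ) :
    Matrix (Fin 2) (Fin 2) ℂ :=
  Matrix.of fun i j => symbolCoeff (fun w => Φ w i j) k

/-- The `2N × 2N` block Toeplitz determinant `D_N[Φ]` generated by the
`2 × 2`-matrix-valued symbol `Φ`. -/
noncomputable def blockToeplitzDet (Φ : ℂ → Matrix (Fin 2) (Fin 2) ℂ) (N : ℕ) : ℂ :=
  Matrix.det (Matrix.of fun p q : Fin N × Fin 2 =>
    blockSymbolCoeff Φ ((p.1 : ℤ) - (q.1 : ℤ)) p.2 q.2)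


section Aux

open Equiv Matrix

/-- The `k`-th Fourier coefficient of the zero symbol is zero. -/
lemma symbolCoeff_zero (k : ℤ) : symbolCoeff (fun _ => (0:ℂ)) k = 0 := by
  simp [symbolCoeff]

/-- Fourier coefficients of `w ↦ -(u w⁻¹)`. -/
lemma symbolCoeff_neg_inv (u : ℂ → ℂ) (k : ℤ) :
    symbolCoeff (fun w => -(u w⁻¹)) k = - symbolCoeff u (-k) := by
  have hkey : ∀ θ : ℝ,
      (u (Complex.exp (Complex.I * ((2 * Real.pi - θ : ℝ) : ℂ))) *
        Complex.exp (-(Complex.I * ((-k : ℤ) : ℂ) * ((2 * Real.pi - θ : ℝ) : ℂ))))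
      = u ((Complex.exp (Complex.I * (θ:ℂ)))⁻¹) *
          Complex.exp (-(Complex.I * ((k:ℤ) : ℂ) * (θ:ℂ))) := by
    intro θ
    have h1 : Complex.exp (Complex.I * ((2 * Real.pi - θ : ℝ) : ℂ))
        = (Complex.exp (Complex.I * (θ:ℂ)))⁻¹ := by
      rw [← Complex.exp_neg]
      push_cast
      rw [show Complex.I * (2 * (Real.pi:ℂ) - (θ:ℂ))
            = 2 * (Real.pi:ℂ) * Complex.I + (-(Complex.I * (θ:ℂ))) by ring,
        Complex.exp_add, Complex.exp_two_pi_mul_I, one_mul]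
    have h2 : Complex.exp (-(Complex.I * ((-k : ℤ) : ℂ) * ((2 * Real.pi - θ : ℝ) : ℂ)))
        = Complex.exp (-(Complex.I * ((k:ℤ) : ℂ) * (θ:ℂ))) := by
      push_cast
      rw [show -(Complex.I * (-(k:ℂ)) * (2 * (Real.pi:ℂ) - (θ:ℂ)))
            = (k:ℂ) * (2 * (Real.pi:ℂ) * Complex.I) + (-(Complex.I * (k:ℂ) * (θ:ℂ))) by ring,
        Complex.exp_add, Complex.exp_int_mul_two_pi_mul_I, one_mul]
    rw [h1, h2]
  have hint : (∫ θ in (0:ℝ)..(2 * Real.pi),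
        u ((Complex.exp (Complex.I * (θ:ℂ)))⁻¹) *
          Complex.exp (-(Complex.I * ((k:ℤ) : ℂ) * (θ:ℂ))))
      = ∫ θ in (0:ℝ)..(2 * Real.pi),
        u (Complex.exp (Complex.I * (θ:ℂ))) *
          Complex.exp (-(Complex.I * ((-k : ℤ) : ℂ) * (θ:ℂ))) := by
    have h := intervalIntegral.integral_comp_sub_left
      (a := (0:ℝ)) (b := (2 * Real.pi : ℝ))
      (fun x : ℝ => u (Complex.exp (Complex.I * (x:ℂ))) *
          Complex.exp (-(Complex.I * ((-k : ℤ) : ℂ) * (x:ℂ)))) (2 * Real.pi)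
    simp only [sub_self, sub_zero] at h
    rw [← h]
    refine intervalIntegral.integral_congr fun θ _ => ?_
    exact (hkey θ).symm
  have hmain : (∫ θ in (0:ℝ)..(2 * Real.pi),
        (fun w => -(u w⁻¹)) (Complex.exp (Complex.I * (θ:ℂ))) *
          Complex.exp (-(Complex.I * ((k:ℤ) : ℂ) * (θ:ℂ))))
      = -∫ θ in (0:ℝ)..(2 * Real.pi),
        u (Complex.exp (Complex.I * (θ:ℂ))) *
          Complex.exp (-(Complex.I * ((-k : ℤ) : ℂ) * (θ:ℂ))) := by
    rw [← hint, ← intervalIntegral.integral_neg]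
    exact intervalIntegral.integral_congr fun θ _ => (neg_mul _ _)
  unfold symbolCoeff
  rw [hmain, mul_neg]

/-- The pairing equivalence between `Fin N ⊕ Fin N` and `Fin N × Fin 2`. -/
def pairEquiv (N : ℕ) : (Fin N ⊕ Fin N) ≃ Fin N × Fin 2 where
  toFun := Sum.elim (fun m => (m, 0)) (fun m => (m, 1))
  invFun := fun p => if p.2 = 0 then Sum.inl p.1 else Sum.inr p.1
  left_inv := by rintro (m | m) <;> simp
  right_inv := by
    rintro ⟨m, j⟩
    fin_cases j <;> simp

/-- The basic transpositions whose product is `Equiv.sumComm`. -/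
def mySwap (N : ℕ) (i : Fin N) : Equiv.Perm (Fin N ⊕ Fin N) :=
  Equiv.swap (Sum.inl i) (Sum.inr i)

lemma mySwap_listProd_apply (N : ℕ) (l : List (Fin N)) (hnd : l.Nodup) (i : Fin N) :
    (i ∈ l → (l.map (mySwap N)).prod (Sum.inl i) = Sum.inr i ∧
        (l.map (mySwap N)).prod (Sum.inr i) = Sum.inl i) ∧
    (i ∉ l → (l.map (mySwap N)).prod (Sum.inl i) = Sum.inl i ∧
        (l.map (mySwap N)).prod (Sum.inr i) = Sum.inr i) := by
  induction l with
  | nil => simp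
  | cons a t ih =>
    rw [List.nodup_cons] at hnd
    obtain ⟨hat, hndt⟩ := hnd
    have ih' := ih hndt
    simp only [List.map_cons, List.prod_cons, Equiv.Perm.mul_apply]
    constructor
    · intro hi
      rcases eq_or_ne i a with rfl | hia
      · have h := ih'.2 hat
        rw [h.1, h.2]
        exact ⟨Equiv.swap_apply_left _ _, Equiv.swap_apply_right _ _⟩
      · have hmem : i ∈ t := by
          rcases List.mem_cons.mp hi with h | h
          · exact absurd h hia
          · exact h
        have h := ih'.1 hmem
        rw [h.1, h.2]
        constructor
        · exact Equiv.swap_apply_of_ne_of_ne (by simp) (by simp [hia])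
        · exact Equiv.swap_apply_of_ne_of_ne (by simp [hia]) (by simp)
    · intro hi
      have hia : i ≠ a := fun h => hi (h ▸ List.mem_cons_self (a := a) (l := t))
      have hmem : i ∉ t := fun h => hi (List.mem_cons_of_mem a h)
      have h := ih'.2 hmem
      rw [h.1, h.2]
      constructor
      · exact Equiv.swap_apply_of_ne_of_ne (by simp [hia]) (by simp)
      · exact Equiv.swap_apply_of_ne_of_ne (by simp) (by simp [hia])

lemma sign_sumComm (N : ℕ) :
    Equiv.Perm.sign (Equiv.sumComm (Fin N) (Fin N)) = (-1) ^ N := by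
  have hprod : ((List.finRange N).map (mySwap N)).prod
      = (Equiv.sumComm (Fin N) (Fin N) : Equiv.Perm (Fin N ⊕ Fin N)) := by
    apply Equiv.ext
    rintro (i | i)
    · have := (mySwap_listProd_apply N _ (List.nodup_finRange N) i).1
        (List.mem_finRange i)
      simpa using this.1
    · have := (mySwap_listProd_apply N _ (List.nodup_finRange N) i).1
        (List.mem_finRange i)
      simpa using this.2
  rw [← hprod, Equiv.Perm.sign_prod_list_swap, List.length_map, List.length_finRange]
  intro g hg
  simp only [List.mem_map, List.mem_finRange, true_and] at hg
  obtain ⟨i, rfl⟩ := hg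
  exact ⟨Sum.inl i, Sum.inr i, by simp, rfl⟩

end Aux

open Matrix in
/-- Factorization of the block Toeplitz determinant with off-diagonal symbol
`Φ(e^{iθ}) = [[0, u(e^{iθ})], [−u(e^{−iθ}), 0]]`: one has `D_N[Φ] = (D_N[u])²`. -/
theorem block_toeplitz_offdiagonal_factorization
    (u : ℂ → ℂ)
    (hu : IntervalIntegrable (fun θ : ℝ => u (Complex.exp (Complex.I * (θ : ℂ))))
      MeasureTheory.volume 0 (2 * Real.pi))
    (N : ℕ) (hN : 1 ≤ N) :
    blockToeplitzDet (fun w => !![0, u w; -(u w⁻¹), 0]) N = (toeplitzDet u N) ^ 2 := by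
  classical
  set A : Matrix (Fin N) (Fin N) ℂ :=
    Matrix.of (fun m n : Fin N => symbolCoeff u ((m : ℤ) - (n : ℤ))) with hA
  have hblock : blockToeplitzDet (fun w => !![0, u w; -(u w⁻¹), 0]) N
      = Matrix.det (Matrix.fromBlocks (0 : Matrix (Fin N) (Fin N) ℂ) A (-Aᵀ) 0) := by
    rw [blockToeplitzDet, ← Matrix.det_submatrix_equiv_self (pairEquiv N)]
    congr 1
    ext x y
    rcases x with m | m <;> rcases y with n | n <;>
      simp [pairEquiv, Matrix.submatrix_apply, blockSymbolCoeff, hA,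
        symbolCoeff_zero, symbolCoeff_neg_inv, neg_sub]
  have hswap : (Matrix.fromBlocks (-Aᵀ) (0 : Matrix (Fin N) (Fin N) ℂ) 0 A).submatrix
      (Equiv.sumComm (Fin N) (Fin N)) id
      = Matrix.fromBlocks (0 : Matrix (Fin N) (Fin N) ℂ) A (-Aᵀ) 0 := by
    ext x y
    rcases x with m | m <;> rcases y with n | n <;>
      simp [Matrix.submatrix_apply]
  have hdet : Matrix.det (Matrix.fromBlocks (0 : Matrix (Fin N) (Fin N) ℂ) A (-Aᵀ) 0)
      = (A.det) ^ 2 := by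
    rw [← hswap]
    rw [Matrix.det_permute, Matrix.det_fromBlocks_zero₂₁, sign_sumComm,
      Matrix.det_neg, Matrix.det_transpose]
    simp only [Fintype.card_fin, Units.val_pow_eq_pow_val, Units.val_neg, Units.val_one,
      Int.cast_pow, Int.cast_neg, Int.cast_one]
    ring_nf
    rw [mul_comm N 2, pow_mul]
    norm_num
  rw [hblock, hdet]
  rfl
end

section
/- Characteristic polynomial of the correlation matrix on the XY disorder line (Example 2). Let b ∈ ℝ with 0 < |b| < 1, let u(z) = (z − b)/(1 − b z), and for λ ∈ ℂ let Φ_λ be the 2×2-matrix-valued symbol on the unit circle with Φ_λ(e^{iθ}) = [[iλ, u(e^{iθ})], [−u(e^{−iθ}), iλ]]. Then for every integer N ≥ 1 and every λ ∈ ℂ, D_N[Φ_λ] = (1 − λ²)^{N−1} · (b^{2N} − λ²). (This is det(iλ − A_N) for the BDI chain with f(z) = z^{-1}(z−b)², so the single non-trivial correlation-matrix eigenvalue of a subsystem of size N is |b|^N.) -/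
open scoped BigOperators
open Filter

open intervalIntegral MeasureTheory Complex Finset
open scoped ENNReal NNReal Matrix


lemma int_exp_int (m : ℤ) :
    (∫ θ in (0:ℝ)..(2 * Real.pi), Complex.exp (Complex.I * (m:ℂ) * (θ:ℝ))) =
      if m = 0 then (2 * Real.pi : ℝ) else 0 := by
  rcases eq_or_ne m 0 with h | h
  · simp [h]
  · rw [if_neg h, integral_exp_mul_complex (by simp [Complex.ext_iff, h] : Complex.I * (m:ℂ) ≠ 0)]
    have : Complex.exp (Complex.I * (m:ℂ) * ((2 * Real.pi : ℝ) : ℂ)) = 1 := by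
      rw [show Complex.I * (m:ℂ) * ((2 * Real.pi : ℝ) : ℂ) = (m:ℂ) * (2 * Real.pi * Complex.I) by
        push_cast; ring]
      exact Complex.exp_int_mul_two_pi_mul_I m
    rw [show ((2 * Real.pi : ℝ) : ℂ) = 2 * (Real.pi:ℂ) by push_cast; ring] at this
    simp [this]

lemma two_pi_ne : (2 * (Real.pi:ℂ)) ≠ 0 := by
  simp [Real.pi_ne_zero, Complex.ext_iff]

lemma symbolCoeff_const (c : ℂ) (k : ℤ) :
    symbolCoeff (fun _ => c) k = if k = 0 then c else 0 := by
  unfold symbolCoeff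
  have : ∀ θ : ℝ, c * Complex.exp (-(Complex.I * (k : ℂ) * (θ : ℂ)))
      = c * Complex.exp (Complex.I * ((-k : ℤ):ℂ) * (θ:ℝ)) := by
    intro θ; push_cast; ring_nf
  rw [intervalIntegral.integral_congr (fun θ _ => this θ), intervalIntegral.integral_const_mul,
    int_exp_int]
  rcases eq_or_ne k 0 with h | h
  · simp [h]
    have hpi : (Real.pi:ℂ) ≠ 0 := by simpa [Complex.ext_iff] using Real.pi_ne_zero
    field_simp
  · simp [h, neg_eq_zero]

lemma norm_exp_I_int_mul (m : ℤ) (θ : ℝ) : ‖Complex.exp (Complex.I * (m:ℂ) * (θ:ℝ))‖ = 1 := by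
  rw [show Complex.I * (m:ℂ) * (θ:ℝ) = (((m : ℝ) * θ : ℝ):ℂ) * Complex.I by push_cast; ring]
  exact Complex.norm_exp_ofReal_mul_I _

lemma symbolCoeff_geom_aux (a : ℂ) (ha : ‖a‖ < 1) (m : ℕ → ℤ) (F : ℝ → ℂ)
    (hpt : ∀ θ : ℝ, HasSum (fun n : ℕ => a ^ n * Complex.exp (Complex.I * ((m n : ℤ):ℂ) * (θ:ℝ)))
      (F θ)) :
    (∫ θ in (0:ℝ)..(2 * Real.pi), F θ)
      = ∑' n : ℕ, a ^ n * (if m n = 0 then (2 * Real.pi : ℝ) else 0) := by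
  have h2pi : (0:ℝ) ≤ 2 * Real.pi := by positivity
  set f : ℕ → ℝ → ℂ := fun n θ => a ^ n * Complex.exp (Complex.I * ((m n : ℤ):ℂ) * (θ:ℝ)) with hf
  have hcont : ∀ n, Continuous (f n) := by
    intro n
    exact continuous_const.mul (Complex.continuous_exp.comp
      (continuous_const.mul Complex.continuous_ofReal))
  have hnorm : ∀ n θ, ‖f n θ‖ = ‖a‖ ^ n := by
    intro n θ
    rw [hf]; simp only [norm_mul, norm_pow, norm_exp_I_int_mul, mul_one]
  have hFeq : ∀ θ : ℝ, F θ = ∑' n, f n θ := fun θ => ((hpt θ).tsum_eq).symm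
  rw [intervalIntegral.integral_congr (fun θ _ => hFeq θ),
    intervalIntegral.integral_of_le h2pi]
  rw [MeasureTheory.integral_tsum
    (fun n => (hcont n).aestronglyMeasurable)
    ?_]
  · congr 1
    funext n
    rw [← intervalIntegral.integral_of_le h2pi, hf]
    simp only
    rw [intervalIntegral.integral_const_mul, int_exp_int (m n)]
  · -- summability of lintegrals
    have hv : (volume (Set.Ioc (0:ℝ) (2*Real.pi))) = ENNReal.ofReal (2*Real.pi) := by
      simp [Real.volume_Ioc]
    have hlin : ∀ n : ℕ, (∫⁻ θ in Set.Ioc (0:ℝ) (2*Real.pi), ‖f n θ‖₊ ∂volume)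
        = (‖a‖₊ : ℝ≥0∞) ^ n * ENNReal.ofReal (2*Real.pi) := by
      intro n
      have : ∀ θ : ℝ, (‖f n θ‖₊ : ℝ≥0∞) = (‖a‖₊ : ℝ≥0∞) ^ n := by
        intro θ
        have := hnorm n θ
        rw [← ENNReal.coe_pow]
        norm_cast
        ext
        simpa using this
      rw [lintegral_congr this, MeasureTheory.setLIntegral_const, hv]
    simp only [enorm_eq_nnnorm]
    rw [tsum_congr hlin, ENNReal.tsum_mul_right]
    apply ENNReal.mul_ne_top _ (ENNReal.ofReal_ne_top)
    rw [ENNReal.tsum_geometric]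
    have hlt : (‖a‖₊ : ℝ≥0∞) < 1 := by
      rw [← ENNReal.coe_one, ENNReal.coe_lt_coe]
      exact_mod_cast ha
    exact ENNReal.inv_ne_top.2 (by simpa using (tsub_pos_of_lt hlt).ne')

lemma symbolCoeff_geom (a : ℂ) (ha : ‖a‖ < 1) (k : ℤ) :
    symbolCoeff (fun w => (1 - a * w)⁻¹) k = if 0 ≤ k then a ^ k.toNat else 0 := by
  unfold symbolCoeff
  have hpt : ∀ θ : ℝ, HasSum
      (fun n : ℕ => a ^ n * Complex.exp (Complex.I * ((((n:ℤ) - k : ℤ)):ℂ) * (θ:ℝ)))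
      ((1 - a * Complex.exp (Complex.I * (θ:ℂ)))⁻¹
        * Complex.exp (-(Complex.I * (k:ℂ) * (θ:ℂ)))) := by
    intro θ
    have hnrm : ‖a * Complex.exp (Complex.I * (θ:ℂ))‖ < 1 := by
      rw [norm_mul, show Complex.I * (θ:ℂ) = Complex.I * (((1:ℤ)):ℂ) * (θ:ℝ) by push_cast; ring,
        norm_exp_I_int_mul, mul_one]
      exact ha
    have hs := (hasSum_geometric_of_norm_lt_one hnrm).mul_right
      (Complex.exp (-(Complex.I * (k:ℂ) * (θ:ℂ))))
    convert hs using 2 with n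
    · rfl
    rw [mul_pow, ← Complex.exp_nat_mul, mul_assoc (a^n), ← Complex.exp_add]
    congr 1
    push_cast
    ring
  rw [symbolCoeff_geom_aux a ha _ _ hpt]
  rcases le_or_gt 0 k with hk | hk
  · rw [if_pos hk]
    rw [tsum_eq_single k.toNat ?_]
    · rw [if_pos (by omega)]
      push_cast
      rw [one_div_mul_eq_div, mul_div_assoc, div_self two_pi_ne, mul_one]
    · intro n hn
      rw [if_neg (by omega)]
      simp
  · rw [if_neg (by omega)]
    have : ∀ n : ℕ, a ^ n * (((if ((n:ℤ) - k = 0) then (2 * Real.pi : ℝ) else 0) : ℝ) : ℂ) = 0 := by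
      intro n; rw [if_neg (by omega)]; simp
    rw [tsum_congr this, tsum_zero, mul_zero]

lemma symbolCoeff_geom_inv (a : ℂ) (ha : ‖a‖ < 1) (k : ℤ) :
    symbolCoeff (fun w => (1 - a * w⁻¹)⁻¹) k = if k ≤ 0 then a ^ (-k).toNat else 0 := by
  unfold symbolCoeff
  have hpt : ∀ θ : ℝ, HasSum
      (fun n : ℕ => a ^ n * Complex.exp (Complex.I * (((-(n:ℤ) - k : ℤ)):ℂ) * (θ:ℝ)))
      ((1 - a * (Complex.exp (Complex.I * (θ:ℂ)))⁻¹)⁻¹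
        * Complex.exp (-(Complex.I * (k:ℂ) * (θ:ℂ)))) := by
    intro θ
    rw [← Complex.exp_neg]
    have hnrm : ‖a * Complex.exp (-(Complex.I * (θ:ℂ)))‖ < 1 := by
      rw [norm_mul, show -(Complex.I * (θ:ℂ)) = Complex.I * (((-1:ℤ)):ℂ) * (θ:ℝ) by push_cast; ring,
        norm_exp_I_int_mul, mul_one]
      exact ha
    have hs := (hasSum_geometric_of_norm_lt_one hnrm).mul_right
      (Complex.exp (-(Complex.I * (k:ℂ) * (θ:ℂ))))
    convert hs using 2 with n
    · rfl
    rw [mul_pow, ← Complex.exp_nat_mul, mul_assoc (a^n), ← Complex.exp_add]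
    congr 1
    push_cast
    ring
  rw [symbolCoeff_geom_aux a ha _ _ hpt]
  rcases le_or_gt k 0 with hk | hk
  · rw [if_pos hk]
    rw [tsum_eq_single (-k).toNat ?_]
    · rw [if_pos (by omega)]
      push_cast
      rw [one_div_mul_eq_div, mul_div_assoc, div_self two_pi_ne, mul_one]
    · intro n hn
      rw [if_neg (by omega)]
      simp
  · rw [if_neg (by omega)]
    have : ∀ n : ℕ, a ^ n * (((if (-(n:ℤ) - k = 0) then (2 * Real.pi : ℝ) else 0) : ℝ) : ℂ) = 0 := by
      intro n; rw [if_neg (by omega)]; simp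
    rw [tsum_congr this, tsum_zero, mul_zero]

/-- coefficients: `ccn β 0 = -β`, `ccn β j = (1-β²)β^(j-1)` for `j ≥ 1`. -/
noncomputable def ccn (β : ℂ) (j : ℕ) : ℂ := if j = 0 then -β else (1 - β^2) * β^(j-1)

noncomputable def cc (β : ℂ) (k : ℤ) : ℂ := if 0 ≤ k then ccn β k.toNat else 0

lemma symbolCoeff_congr {t s : ℂ → ℂ} (k : ℤ)
    (h : ∀ θ : ℝ, t (Complex.exp (Complex.I * θ)) = s (Complex.exp (Complex.I * θ))) :
    symbolCoeff t k = symbolCoeff s k := by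
  unfold symbolCoeff
  rw [intervalIntegral.integral_congr (fun θ _ => by rw [h θ])]

lemma symbolCoeff_linear (c₁ c₂ : ℂ) (s : ℂ → ℂ) (k : ℤ)
    (hs : Continuous fun θ : ℝ => s (Complex.exp (Complex.I * θ))) :
    symbolCoeff (fun w => c₁ + c₂ * s w) k
      = c₁ * symbolCoeff (fun _ => 1) k + c₂ * symbolCoeff s k := by
  unfold symbolCoeff
  have he : Continuous fun θ : ℝ => Complex.exp (-(Complex.I * (k:ℂ) * (θ:ℂ))) := by
    exact Complex.continuous_exp.comp (by continuity)
  have h1 : IntervalIntegrable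
      (fun θ : ℝ => c₁ * ((1:ℂ) * Complex.exp (-(Complex.I * (k:ℂ) * (θ:ℂ)))))
      MeasureTheory.volume 0 (2*Real.pi) :=
    ((continuous_const.mul (continuous_const.mul he))).intervalIntegrable _ _
  have h2 : IntervalIntegrable
      (fun θ : ℝ => c₂ * (s (Complex.exp (Complex.I * (θ:ℂ))) * Complex.exp (-(Complex.I * (k:ℂ) * (θ:ℂ)))))
      MeasureTheory.volume 0 (2*Real.pi) :=
    ((continuous_const.mul (hs.mul he))).intervalIntegrable _ _
  rw [intervalIntegral.integral_congr
    (g := fun θ : ℝ => c₁ * ((1:ℂ) * Complex.exp (-(Complex.I * (k:ℂ) * (θ:ℂ))))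
      + c₂ * (s (Complex.exp (Complex.I * (θ:ℂ))) * Complex.exp (-(Complex.I * (k:ℂ) * (θ:ℂ)))))
    (fun θ _ => by ring), intervalIntegral.integral_add h1 h2,
  ]
  simp only [intervalIntegral.integral_const_mul]
  ring

lemma one_sub_mul_exp_ne (β : ℂ) (hβ : ‖β‖ < 1) (z : ℂ) (hz : ‖z‖ = 1) :
    1 - β * z ≠ 0 := by
  intro h
  have : β * z = 1 := by linear_combination -h
  have := congrArg norm this
  rw [norm_mul, hz, mul_one, norm_one] at this
  exact absurd this (ne_of_lt hβ)

lemma norm_exp_I_theta (θ : ℝ) : ‖Complex.exp (Complex.I * (θ:ℂ))‖ = 1 := by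
  simpa using norm_exp_I_int_mul 1 θ

lemma symbolCoeff_u (β : ℂ) (hβ0 : β ≠ 0) (hβ : ‖β‖ < 1) (k : ℤ) :
    symbolCoeff (fun w => (w - β)/(1 - β * w)) k = cc β k := by
  rw [symbolCoeff_congr (s := fun w => -β⁻¹ + ((1 - β^2) * β⁻¹) * (1 - β * w)⁻¹) k ?_,
    symbolCoeff_linear _ _ _ _ ?_, symbolCoeff_const, symbolCoeff_geom β hβ k]
  · unfold cc ccn
    rcases lt_trichotomy k 0 with hk | hk | hk
    · rw [if_neg (by omega), if_neg (by omega), if_neg (by omega)]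
      ring
    · subst hk
      norm_num
      field_simp
      ring
    · rw [if_neg (by omega), if_pos (by omega), if_pos (by omega), if_neg (by omega)]
      have ht : k.toNat = (k.toNat - 1) + 1 := by omega
      rw [ht, pow_succ]
      simp only [Nat.add_sub_cancel]
      field_simp
      ring
  · apply Continuous.inv₀
    · continuity
    · intro θ
      exact one_sub_mul_exp_ne β hβ _ (norm_exp_I_theta θ)
  · intro θ
    have hne := one_sub_mul_exp_ne β hβ _ (norm_exp_I_theta θ)
    have hne' : 1 - Complex.exp (Complex.I * θ) * β ≠ 0 := by rwa [mul_comm] at hne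
    field_simp
    ring

lemma symbolCoeff_v (β : ℂ) (hβ0 : β ≠ 0) (hβ : ‖β‖ < 1) (k : ℤ) :
    symbolCoeff (fun w => -((w⁻¹ - β)/(1 - β * w⁻¹))) k = -(cc β (-k)) := by
  have hnrm : ∀ θ : ℝ, ‖(Complex.exp (Complex.I * (θ:ℂ)))⁻¹‖ = 1 := by
    intro θ; rw [norm_inv, norm_exp_I_theta]; norm_num
  rw [symbolCoeff_congr (s := fun w => β⁻¹ + (-((1 - β^2) * β⁻¹)) * (1 - β * w⁻¹)⁻¹) k ?_,
    symbolCoeff_linear _ _ _ _ ?_, symbolCoeff_const, symbolCoeff_geom_inv β hβ k]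
  · unfold cc ccn
    rcases lt_trichotomy k 0 with hk | hk | hk
    · rw [if_neg (by omega), if_pos (by omega), if_pos (by omega), if_neg (by omega)]
      have ht : (-k).toNat = ((-k).toNat - 1) + 1 := by omega
      rw [ht, pow_succ]
      simp only [Nat.add_sub_cancel]
      field_simp
      ring
    · subst hk
      norm_num
      field_simp
      ring
    · rw [if_neg (by omega), if_neg (by omega), if_neg (by omega)]
      ring
  · apply Continuous.inv₀
    · exact (continuous_const.sub (continuous_const.mul
        (Continuous.inv₀ (by continuity) (fun θ => Complex.exp_ne_zero _))))
    · intro θ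
      exact one_sub_mul_exp_ne β hβ _ (hnrm θ)
  · intro θ
    have hne := one_sub_mul_exp_ne β hβ _ (hnrm θ)
    have hez : Complex.exp (Complex.I * (θ:ℂ)) ≠ 0 := Complex.exp_ne_zero _
    have hwb : Complex.exp (Complex.I * (θ:ℂ)) - β ≠ 0 := by
      rw [sub_ne_zero]
      intro h
      rw [← h, norm_exp_I_theta] at hβ
      exact absurd hβ (lt_irrefl _)
    field_simp
    ring

noncomputable def Tm (β : ℂ) (N : ℕ) : Matrix (Fin N) (Fin N) ℂ :=
  Matrix.of fun m n => cc β ((m:ℤ) - (n:ℤ))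

noncomputable def vv (β : ℂ) (N : ℕ) : Fin N → ℂ := fun m => β ^ (N - 1 - (m:ℕ))

lemma cc_neg (β : ℂ) (k : ℤ) (hk : k < 0) : cc β k = 0 := by
  unfold cc; rw [if_neg (by omega)]

lemma cc_ofNat (β : ℂ) (j : ℕ) : cc β (j:ℤ) = ccn β j := by
  unfold cc; rw [if_pos (by omega)]; norm_num

lemma sum_aux (β : ℂ) (N : ℕ) (m n : Fin N) (h : (n:ℕ) ≤ (m:ℕ)) :
    ∑ k : Fin N, cc β ((k:ℤ) - (m:ℤ)) * cc β ((k:ℤ) - (n:ℤ))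
      = (if m = n then 1 else 0)
        - (1 - β^2) * (β ^ (N - 1 - (m:ℕ)) * β ^ (N - 1 - (n:ℕ))) := by
  have hmN : (m:ℕ) < N := m.isLt
  set g : ℕ → ℂ := fun k => cc β ((k:ℤ) - (m:ℤ)) * cc β ((k:ℤ) - (n:ℤ)) with hg
  have h0 : ∑ k : Fin N, cc β ((k:ℤ) - (m:ℤ)) * cc β ((k:ℤ) - (n:ℤ)) = ∑ k ∈ range N, g k := by
    rw [hg]; exact Fin.sum_univ_eq_sum_range (fun k => cc β ((k:ℤ) - ((m:ℕ):ℤ)) * cc β ((k:ℤ) - ((n:ℕ):ℤ))) N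
  rw [h0, range_eq_Ico, ← Finset.sum_Ico_consecutive _ (Nat.zero_le (m:ℕ)) hmN.le]
  have hz : ∑ k ∈ Ico 0 (m:ℕ), g k = 0 := by
    apply Finset.sum_eq_zero
    intro k hk
    rw [mem_Ico] at hk
    rw [hg]
    simp only
    rw [cc_neg β _ (by omega), zero_mul]
  rw [hz, zero_add, Finset.sum_Ico_eq_sum_range]
  obtain ⟨M, hM⟩ : ∃ M, N - (m:ℕ) = M + 1 := ⟨N - (m:ℕ) - 1, by omega⟩
  rw [hM]
  set d : ℕ := (m:ℕ) - (n:ℕ) with hd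
  have hgj : ∀ j : ℕ, g ((m:ℕ) + j) = ccn β j * ccn β (j + d) := by
    intro j
    rw [hg]
    simp only
    rw [show ((((m:ℕ) + j : ℕ)):ℤ) - (m:ℤ) = (j:ℤ) by push_cast; ring,
      show ((((m:ℕ) + j : ℕ)):ℤ) - (n:ℤ) = ((j + d : ℕ):ℤ) by push_cast; omega,
      cc_ofNat, cc_ofNat]
  rw [Finset.sum_congr rfl (fun j _ => hgj j), Finset.sum_range_succ']
  have hsh : ∀ i : ℕ, ccn β (i+1) * ccn β (i+1+d) = (1-β^2)^2 * β^d * (β^2)^i := by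
    intro i
    unfold ccn
    rw [if_neg (by omega), if_neg (by omega)]
    simp only [Nat.add_sub_cancel, show i+1+d-1 = i+d by omega]
    rw [show (β^2)^i = β^i * β^i by rw [sq, mul_pow], pow_add]
    ring
  rw [Finset.sum_congr rfl (fun i _ => hsh i), ← Finset.mul_sum]
  simp only [Nat.zero_add]
  set G : ℂ := ∑ i ∈ range M, (β^2)^i with hG
  have key : (1 - β^2) * G = 1 - (β^2)^M := by
    have := geom_sum_mul (β^2) M
    rw [hG]; linear_combination -this
  -- exponents
  have hNm : N - 1 - (m:ℕ) = M := by omega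
  have hNn : N - 1 - (n:ℕ) = M + d := by omega
  rw [hNm, hNn]
  have e1 : (β^2)^M = β^M * β^M := by rw [sq, mul_pow]
  rw [e1] at key
  rcases Nat.eq_zero_or_pos d with hd0 | hd1
  · have hmn : m = n := by
      apply Fin.ext; omega
    rw [if_pos hmn, hd0]
    unfold ccn
    norm_num
    linear_combination (1 - β^2) * key
  · have hmn : ¬ (m = n) := by
      intro hc
      rw [hc] at hd
      omega
    rw [if_neg hmn]
    unfold ccn
    rw [if_pos rfl, if_neg (by omega), pow_add β M d]
    have e2 : β * β^(d-1) = β^d := by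
      rw [← pow_succ']
      congr 1
      omega
    linear_combination ((1-β^2) * β^d) * key - (1-β^2) * e2

lemma TtT (β : ℂ) (N : ℕ) :
    (Tm β N)ᵀ * (Tm β N)
      = 1 - (1 - β^2) • Matrix.vecMulVec (vv β N) (vv β N) := by
  ext m n
  have hL : ((Tm β N)ᵀ * Tm β N) m n
      = ∑ k : Fin N, cc β ((k:ℤ) - ((m:ℕ):ℤ)) * cc β ((k:ℤ) - ((n:ℕ):ℤ)) := by
    simp only [Matrix.mul_apply, Matrix.transpose_apply, Tm, Matrix.of_apply]
  have hR : ((1 - (1 - β^2) • Matrix.vecMulVec (vv β N) (vv β N)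
        : Matrix (Fin N) (Fin N) ℂ)) m n
      = (if m = n then 1 else 0)
        - (1 - β^2) * (β ^ (N - 1 - (m:ℕ)) * β ^ (N - 1 - (n:ℕ))) := by
    simp only [Matrix.sub_apply, Matrix.smul_apply, Matrix.one_apply,
      Matrix.vecMulVec_apply, smul_eq_mul, vv]
  rw [hL, hR]
  rcases le_total (n:ℕ) (m:ℕ) with h | h
  · exact sum_aux β N m n h
  · have hs := sum_aux β N n m h
    calc (∑ k : Fin N, cc β (((k:ℕ):ℤ) - ((m:ℕ):ℤ)) * cc β (((k:ℕ):ℤ) - ((n:ℕ):ℤ)))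
        = ∑ k : Fin N, cc β (((k:ℕ):ℤ) - ((n:ℕ):ℤ)) * cc β (((k:ℕ):ℤ) - ((m:ℕ):ℤ)) := by
          apply Finset.sum_congr rfl; intros; ring
      _ = (if n = m then 1 else 0)
          - (1 - β^2) * (β ^ (N - 1 - (n:ℕ)) * β ^ (N - 1 - (m:ℕ))) := hs
      _ = (if m = n then 1 else 0)
          - (1 - β^2) * (β ^ (N - 1 - (m:ℕ)) * β ^ (N - 1 - (n:ℕ))) := by
          rcases eq_or_ne m n with rfl | hne
          · ring_nf
          · rw [if_neg hne, if_neg (Ne.symm hne)]; ring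

lemma det_blocks (β lam : ℂ) (N : ℕ) (hN : 1 ≤ N)
    (hl0 : Complex.I * lam ≠ 0) (hl1 : (1:ℂ) - lam^2 ≠ 0) :
    Matrix.det (Matrix.fromBlocks
      ((Complex.I * lam) • (1 : Matrix (Fin N) (Fin N) ℂ)) (Tm β N)
      (-(Tm β N)ᵀ) ((Complex.I * lam) • 1))
    = (1 - lam^2)^(N-1) * ((β^2)^N - lam^2) := by
  set α : ℂ := Complex.I * lam with hα
  have hαsq : α^2 = -lam^2 := by rw [hα, mul_pow, Complex.I_sq]; ring
  letI : Invertible (α • (1 : Matrix (Fin N) (Fin N) ℂ)) :=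
    ⟨α⁻¹ • 1,
      by rw [Matrix.smul_mul, Matrix.one_mul, smul_smul, inv_mul_cancel₀ hl0, one_smul],
      by rw [Matrix.smul_mul, Matrix.one_mul, smul_smul, mul_inv_cancel₀ hl0, one_smul]⟩
  rw [Matrix.det_fromBlocks₁₁]
  have hinv : ⅟(α • (1 : Matrix (Fin N) (Fin N) ℂ)) = α⁻¹ • 1 := rfl
  rw [hinv]
  have hmat : (α • (1:Matrix (Fin N) (Fin N) ℂ))
      - (-(Tm β N)ᵀ) * (α⁻¹ • 1) * (Tm β N)
      = α⁻¹ • ((Tm β N)ᵀ * Tm β N - lam^2 • 1) := by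
    rw [Matrix.mul_smul, Matrix.mul_one, Matrix.smul_mul, Matrix.neg_mul, smul_neg,
      sub_neg_eq_add, smul_sub, smul_smul]
    have hsc : α • (1:Matrix (Fin N) (Fin N) ℂ) = -((α⁻¹ * lam^2) • 1) := by
      rw [← neg_smul]
      congr 1
      field_simp
      linear_combination hαsq + lam^2 * sq α
    rw [hsc]
    abel
  rw [hmat, Matrix.det_smul, Matrix.det_smul, Fintype.card_fin]
  rw [Matrix.det_one, mul_one, ← mul_assoc, ← mul_pow, mul_inv_cancel₀ hl0, one_pow, one_mul]
  rw [TtT]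
  have hX : ((1 - (1 - β^2) • Matrix.vecMulVec (vv β N) (vv β N)) - lam^2 • 1
      : Matrix (Fin N) (Fin N) ℂ)
      = (1-lam^2) • (1 + Matrix.vecMulVec (((1-lam^2)⁻¹ * (-(1-β^2))) • (vv β N)) (vv β N)) := by
    ext i j
    simp only [Matrix.sub_apply, Matrix.add_apply, Matrix.smul_apply, Matrix.one_apply,
      Matrix.vecMulVec_apply, smul_eq_mul, Pi.smul_apply]
    rcases eq_or_ne i j with rfl | hne
    · simp only [if_pos rfl]
      field_simp
      ring
    · simp only [if_neg hne]
      field_simp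
      ring
  rw [hX, Matrix.det_smul, Fintype.card_fin, Matrix.vecMulVec_eq Unit,
    Matrix.det_one_add_replicateCol_mul_replicateRow]
  have hvv : vv β N ⬝ᵥ (((1-lam^2)⁻¹ * (-(1-β^2))) • (vv β N))
      = ((1-lam^2)⁻¹ * (-(1-β^2))) * ∑ j ∈ range N, (β^2)^j := by
    rw [dotProduct_smul, smul_eq_mul]
    congr 1
    unfold vv
    rw [dotProduct]
    rw [Fin.sum_univ_eq_sum_range (fun k => β^(N-1-k) * β^(N-1-k)) N,
      ← Finset.sum_range_reflect (fun j => (β^2)^j) N]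
    apply Finset.sum_congr rfl
    intro k hk
    rw [sq, mul_pow]
  rw [hvv]
  have hgeom : (1-β^2) * ∑ j ∈ range N, (β^2)^j = 1 - (β^2)^N := by
    linear_combination -(geom_sum_mul (β^2) N)
  have hpow : (1-lam^2)^N = (1-lam^2)^(N-1) * (1-lam^2) := by
    conv_lhs => rw [show N = (N-1)+1 by omega]
    rw [pow_succ]
  have hc : (1-lam^2) * (1 + (1-lam^2)⁻¹ * -(1-β^2) * ∑ j ∈ range N, (β^2)^j)
      = (β^2)^N - lam^2 := by
    rw [mul_add, mul_one]
    have hq : (1-lam^2) * ((1-lam^2)⁻¹ * -(1-β^2) * ∑ j ∈ range N, (β^2)^j)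
        = -(1-β^2) * ∑ j ∈ range N, (β^2)^j := by
      rw [← mul_assoc, ← mul_assoc, mul_inv_cancel₀ hl1, one_mul]
    rw [hq]
    linear_combination -hgeom
  rw [hpow, mul_assoc, hc]

lemma block_reduce (β : ℂ) (hβ0 : β ≠ 0) (hβ : ‖β‖ < 1) (lam : ℂ) (N : ℕ) :
    blockToeplitzDet
      (fun w => !![Complex.I * lam, (w - β) / (1 - β * w);
                   -((w⁻¹ - β) / (1 - β * w⁻¹)), Complex.I * lam]) N
      = Matrix.det (Matrix.fromBlocks
          ((Complex.I * lam) • (1 : Matrix (Fin N) (Fin N) ℂ)) (Tm β N)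
          (-(Tm β N)ᵀ) ((Complex.I * lam) • 1)) := by
  classical
  unfold blockToeplitzDet
  let e : Fin N ⊕ Fin N ≃ Fin N × Fin 2 :=
    { toFun := Sum.elim (fun i => (i, 0)) (fun i => (i, 1))
      invFun := fun p => if p.2 = 0 then Sum.inl p.1 else Sum.inr p.1
      left_inv := by rintro (i | i) <;> simp
      right_inv := by rintro ⟨i, j⟩; fin_cases j <;> simp }
  rw [← Matrix.det_submatrix_equiv_self e]
  congr 1
  ext p q
  have hdiag : ∀ m n : Fin N, symbolCoeff (fun _ => Complex.I * lam) ((m:ℤ) - (n:ℤ))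
      = (Complex.I * lam) * (1 : Matrix (Fin N) (Fin N) ℂ) m n := by
    intro m n
    rw [symbolCoeff_const, Matrix.one_apply]
    rcases eq_or_ne m n with rfl | hne
    · rw [if_pos (by ring), if_pos rfl, mul_one]
    · rw [if_neg (by
        intro hc
        apply hne
        apply Fin.ext
        omega), if_neg hne, mul_zero]
  rcases p with p | p <;> rcases q with q | q <;>
    simp only [e, Matrix.submatrix_apply, Equiv.coe_fn_mk, Sum.elim_inl, Sum.elim_inr,
      Matrix.of_apply, blockSymbolCoeff, Matrix.fromBlocks_apply₁₁, Matrix.fromBlocks_apply₁₂,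
      Matrix.fromBlocks_apply₂₁, Matrix.fromBlocks_apply₂₂, Matrix.cons_val', Matrix.cons_val_zero,
      Matrix.cons_val_one, Matrix.head_cons, Matrix.head_fin_const, Matrix.empty_val',
      Matrix.cons_val_fin_one, Matrix.smul_apply, smul_eq_mul]
  · exact hdiag p q
  · rw [symbolCoeff_u β hβ0 hβ]
    rfl
  · rw [symbolCoeff_v β hβ0 hβ]
    simp only [Matrix.neg_apply, Matrix.transpose_apply, Tm, Matrix.of_apply, neg_inj]
    congr 1
    ring
  · exact hdiag p q


/-- Example 2: characteristic polynomial of the correlation matrix on the XY disorder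
line, `f(z) = z⁻¹(z−b)²` with `0 < |b| < 1`. -/
theorem xy_disorder_line_char_poly
    (b : ℝ) (hb0 : 0 < |b|) (hb1 : |b| < 1)
    (N : ℕ) (hN : 1 ≤ N) (lam : ℂ) :
    blockToeplitzDet
      (fun w => !![Complex.I * lam, (w - (b : ℂ)) / (1 - (b : ℂ) * w);
                   -((w⁻¹ - (b : ℂ)) / (1 - (b : ℂ) * w⁻¹)), Complex.I * lam]) N
      = (1 - lam ^ 2) ^ (N - 1) * ((b : ℂ) ^ (2 * N) - lam ^ 2) := by

  set β : ℂ := (b : ℂ) with hβdef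
  have hβ0 : β ≠ 0 := by
    simp only [hβdef, ne_eq, Complex.ofReal_eq_zero]
    intro hc
    rw [hc] at hb0
    simp at hb0
  have hβ : ‖β‖ < 1 := by
    rw [hβdef, Complex.norm_real]
    exact hb1
  rw [block_reduce β hβ0 hβ lam N]
  set F : ℂ → ℂ := fun z => Matrix.det (Matrix.fromBlocks
      ((Complex.I * z) • (1 : Matrix (Fin N) (Fin N) ℂ)) (Tm β N)
      (-(Tm β N)ᵀ) ((Complex.I * z) • 1)) with hF
  set G : ℂ → ℂ := fun z => (1 - z^2)^(N-1) * ((β^2)^N - z^2) with hG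
  have hFcont : Continuous F := by
    rw [hF]
    apply Continuous.matrix_det
    apply continuous_matrix
    rintro (i | i) (j | j) <;>
      simp only [Matrix.fromBlocks_apply₁₁, Matrix.fromBlocks_apply₁₂,
        Matrix.fromBlocks_apply₂₁, Matrix.fromBlocks_apply₂₂, Matrix.smul_apply, smul_eq_mul] <;>
      fun_prop
  have hGcont : Continuous G := by
    rw [hG]
    fun_prop
  have hdense : Dense (({0, 1, -1} : Set ℂ)ᶜ) :=
    Set.Countable.dense_compl ℂ ((Set.toFinite ({0, 1, -1} : Set ℂ)).countable)
  have hEq : Set.EqOn F G (({0, 1, -1} : Set ℂ)ᶜ) := by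
    intro z hz
    simp only [Set.mem_compl_iff, Set.mem_insert_iff, Set.mem_singleton_iff, not_or] at hz
    obtain ⟨h0, h1, hm1⟩ := hz
    have hl0 : Complex.I * z ≠ 0 := mul_ne_zero Complex.I_ne_zero h0
    have hl1 : (1:ℂ) - z^2 ≠ 0 := by
      intro hc
      have hsplit : (1 - z) * (1 + z) = 0 := by linear_combination hc
      rcases mul_eq_zero.mp hsplit with h | h
      · exact h1 (by linear_combination -h)
      · exact hm1 (by linear_combination h)
    exact det_blocks β z N hN hl0 hl1
  have hFG : F = G := Continuous.ext_on hdense hFcont hGcont hEq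
  have := congrFun hFG lam
  rw [hF, hG] at this
  simp only at this
  rw [this, ← pow_mul]
end
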